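/- arXiv:1801.05536 — 8 statements merged into one kernel-verified Lean document; each statement's English description precedes it below -/
import Mathlib

section
/- For every integer d ≥ 1 there exists a finite solvable group G with derived length exactly d such that Ω(|G|) < (9 : ℝ)^((d+1)/5), where Ω(|G|) is the number of prime factors of |G| counted with multiplicity. -/
set_option maxRecDepth 100000

open scoped commutatorElement

/-- `Omega n` is the number of prime factors of `n` counted with multiplicity,
usually denoted `Ω(n)`.  For a finite solvable group `G`, `Omega (Nat.card G)`
is the composition length of `G`. -/
def Omega (n : ℕ) : ℕ := n.primeFactorsList.length

/-- `DerivedLengthEq G d` says that the derived (solvable) length of `G` is exactly `d`: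
the `d`-th term of the derived series is trivial and no earlier term is trivial. -/
def DerivedLengthEq (G : Type*) [Group G] (d : ℕ) : Prop :=
  derivedSeries G d = ⊥ ∧ ∀ k < d, derivedSeries G k ≠ ⊥

abbrev F3 := ZMod 3
abbrev Mat := Matrix (Fin 2) (Fin 2) F3
abbrev GLM := GL (Fin 2) F3

def d2 (A : Mat) : F3 := A 0 0 * A 1 1 - A 0 1 * A 1 0
def adj2 (A : Mat) : Mat := !![A 1 1, -A 0 1; -A 1 0, A 0 0]

def Q8p (A : Mat) : Prop :=
  A = 1 ∨ A = !![2,0;0,2] ∨ A = !![0,1;2,0] ∨ A = !![0,2;1,0] ∨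
  A = !![1,1;1,2] ∨ A = !![2,2;2,1] ∨ A = !![1,2;2,2] ∨ A = !![2,1;1,1]
def Zp (A : Mat) : Prop := A = 1 ∨ A = !![2,0;0,2]
instance : DecidablePred Q8p := fun _ => by unfold Q8p; infer_instance
instance : DecidablePred Zp := fun _ => by unfold Zp; infer_instance

theorem adj_uniq : ∀ A B : Mat, d2 A = 1 → A * B = 1 → B = adj2 A := by decide
theorem sl_comm : ∀ A B : Mat, d2 A = 1 → d2 B = 1 → Q8p (A * B * adj2 A * adj2 B) := by decide
theorem q8_comm : ∀ A B : Mat, Q8p A → Q8p B → Zp (A * B * adj2 A * adj2 B) := by decide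
theorem z_comm : ∀ A B : Mat, Zp A → Zp B → A * B * adj2 A * adj2 B = 1 := by decide
theorem q8_det : ∀ A : Mat, Q8p A → d2 A = 1 := by decide
theorem q8_inv : ∀ A B : Mat, Q8p A → A * B = 1 → Q8p B := by decide
theorem z_det : ∀ A : Mat, Zp A → d2 A = 1 := by decide
theorem z_inv : ∀ A B : Mat, Zp A → A * B = 1 → Zp B := by decide
theorem q8_mul : ∀ A B : Mat, Q8p A → Q8p B → Q8p (A * B) := by decide
theorem z_mul : ∀ A B : Mat, Zp A → Zp B → Zp (A * B) := by decide

-- basic unit facts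
theorem inv_val (x : GLM) : (x⁻¹).val = x.inv := rfl

theorem d2_eq_det (A : Mat) : d2 A = A.det := by rw [Matrix.det_fin_two]; rfl

theorem inv_eq_adj2 (x : GLM) (h : d2 x.val = 1) : x.inv = adj2 x.val :=
  adj_uniq _ _ h x.val_inv

theorem comm_val (x y : GLM) (hx : d2 x.val = 1) (hy : d2 y.val = 1) :
    (⁅x, y⁆ : GLM).val = x.val * y.val * adj2 x.val * adj2 y.val := by
  rw [commutatorElement_def]
  show x.val * y.val * x.inv * y.inv = _
  rw [inv_eq_adj2 x hx, inv_eq_adj2 y hy]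

-- subgroups of GLM
def Qsub : Subgroup GLM where
  carrier := {x | Q8p x.val}
  one_mem' := by left; rfl
  mul_mem' := fun ha hb => q8_mul _ _ ha hb
  inv_mem' := fun {x} hx => q8_inv x.val x.inv hx x.val_inv

def Zsub : Subgroup GLM where
  carrier := {x | Zp x.val}
  one_mem' := by left; rfl
  mul_mem' := fun ha hb => z_mul _ _ ha hb
  inv_mem' := fun {x} hx => z_inv x.val x.inv hx x.val_inv

theorem mem_Qsub {x : GLM} : x ∈ Qsub ↔ Q8p x.val := Iff.rfl
theorem mem_Zsub {x : GLM} : x ∈ Zsub ↔ Zp x.val := Iff.rfl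

-- the kernel of det
def SLsub : Subgroup GLM := (Matrix.GeneralLinearGroup.det (n := Fin 2) (R := F3)).ker

theorem mem_SLsub {x : GLM} : x ∈ SLsub ↔ d2 x.val = 1 := by
  rw [SLsub, MonoidHom.mem_ker, Units.ext_iff, Matrix.GeneralLinearGroup.val_det_apply,
    Units.val_one, ← d2_eq_det]

-- derived series chain
theorem gl_d1 : derivedSeries GLM 1 ≤ SLsub := by
  rw [derivedSeries_succ, derivedSeries_zero, Subgroup.commutator_le]
  intro x _ y _
  rw [SLsub, MonoidHom.mem_ker, map_commutatorElement]
  exact commutatorElement_eq_one_iff_commute.mpr (mul_comm _ _)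

theorem gl_d2 : derivedSeries GLM 2 ≤ Qsub := by
  refine le_trans (le_of_eq (derivedSeries_succ GLM 1))
    (le_trans (Subgroup.commutator_mono gl_d1 gl_d1) (Subgroup.commutator_le.mpr ?_))
  intro x hx y hy
  · 
    rw [mem_SLsub] at hx hy
    rw [mem_Qsub, comm_val x y hx hy]
    exact sl_comm _ _ hx hy

theorem gl_d3 : derivedSeries GLM 3 ≤ Zsub := by
  refine le_trans (le_of_eq (derivedSeries_succ GLM 2))
    (le_trans (Subgroup.commutator_mono gl_d2 gl_d2) (Subgroup.commutator_le.mpr ?_))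
  intro x hx y hy
  · 
    rw [mem_Qsub] at hx hy
    rw [mem_Zsub, comm_val x y (q8_det _ hx) (q8_det _ hy)]
    exact q8_comm _ _ hx hy

theorem gl_d4 : derivedSeries GLM 4 = ⊥ := by
  refine le_bot_iff.mp (le_trans (le_of_eq (derivedSeries_succ GLM 3))
    (le_trans (Subgroup.commutator_mono gl_d3 gl_d3) (Subgroup.commutator_le.mpr ?_)))
  intro x hx y hy
  rw [mem_Zsub] at hx hy
  rw [Subgroup.mem_bot]
  apply Units.ext
  rw [comm_val x y (z_det _ hx) (z_det _ hy), Units.val_one]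
  exact z_comm _ _ hx hy
def mkGL (A B : Mat) (h1 : A * B = 1) (h2 : B * A = 1) : GLM := ⟨A, B, h1, h2⟩

def gm1 : GLM := mkGL !![0,1;1,1] !![2,1;1,0] (by decide) (by decide)
def gm2 : GLM := mkGL !![2,0;2,2] !![2,0;1,2] (by decide) (by decide)
def gp2 : GLM := mkGL !![0,1;1,2] !![1,1;1,0] (by decide) (by decide)
def gq2 : GLM := mkGL !![0,1;2,1] !![1,2;1,0] (by decide) (by decide)
def gx1 : GLM := mkGL !![2,1;1,1] !![1,2;2,2] (by decide) (by decide)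
def gy1 : GLM := mkGL !![1,2;0,1] !![1,1;0,1] (by decide) (by decide)
def gx2 : GLM := mkGL !![0,1;2,0] !![0,2;1,0] (by decide) (by decide)
def gy2 : GLM := mkGL !![0,1;2,1] !![1,2;1,0] (by decide) (by decide)
def ga1 : GLM := mkGL !![0,1;1,2] !![1,1;1,0] (by decide) (by decide)
def gb1 : GLM := mkGL !![0,1;2,0] !![0,2;1,0] (by decide) (by decide)
def gc1 : GLM := mkGL !![1,0;0,2] !![1,0;0,2] (by decide) (by decide)
def gd1 : GLM := mkGL !![1,1;0,2] !![1,1;0,2] (by decide) (by decide)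
def ga2 : GLM := mkGL !![0,1;1,0] !![0,1;1,0] (by decide) (by decide)
def gb2 : GLM := mkGL !![1,2;1,1] !![2,2;1,2] (by decide) (by decide)
def gd2 : GLM := mkGL !![0,1;1,1] !![2,1;1,0] (by decide) (by decide)
def gi : GLM := mkGL !![0,2;1,0] !![0,1;2,0] (by decide) (by decide)
def gj : GLM := mkGL !![2,2;2,1] !![1,1;1,2] (by decide) (by decide)
def gneg : GLM := mkGL !![2,0;0,2] !![2,0;0,2] (by decide) (by decide)

theorem units_eq (x y : GLM) (h : x.val = y.val) : x = y := Units.ext h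

theorem t_gm2 : ⁅gp2, gq2⁆ = gm2 := by apply units_eq; decide
theorem t_gx1 : ⁅ga1, gb1⁆ = gx1 := by apply units_eq; decide
theorem t_gy1 : ⁅gc1, gd1⁆ = gy1 := by apply units_eq; decide
theorem t_gx2 : ⁅ga2, gb2⁆ = gx2 := by apply units_eq; decide
theorem t_gy2 : ⁅ga2, gd2⁆ = gy2 := by apply units_eq; decide
theorem t_gi : ⁅gx1, gy1⁆ = gi := by apply units_eq; decide
theorem t_gj : ⁅gx2, gy2⁆ = gj := by apply units_eq; decide
theorem t_gneg : ⁅gi, gj⁆ = gneg := by apply units_eq; decide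

-- memberships
theorem mem_d1 {x : GLM} (a b : GLM) (h : ⁅a, b⁆ = x) : x ∈ derivedSeries GLM 1 := by
  rw [← h]
  exact Subgroup.commutator_mem_commutator (Subgroup.mem_top a) (Subgroup.mem_top b)

theorem gm2_mem : gm2 ∈ derivedSeries GLM 1 := mem_d1 gp2 gq2 t_gm2

theorem gi_mem : gi ∈ derivedSeries GLM 2 := by
  rw [← t_gi]
  exact Subgroup.commutator_mem_commutator (mem_d1 ga1 gb1 t_gx1) (mem_d1 gc1 gd1 t_gy1)

theorem gj_mem : gj ∈ derivedSeries GLM 2 := by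
  rw [← t_gj]
  exact Subgroup.commutator_mem_commutator (mem_d1 ga2 gb2 t_gx2) (mem_d1 ga2 gd2 t_gy2)

theorem gneg_mem : gneg ∈ derivedSeries GLM 3 := by
  rw [← t_gneg]
  exact Subgroup.commutator_mem_commutator gi_mem gj_mem

section General
variable {G : Type*} [Group G]

theorem derivedSeries_succ_le (n : ℕ) : derivedSeries G (n+1) ≤ derivedSeries G n := by
  rw [derivedSeries_succ]
  exact Subgroup.commutator_le.mpr fun a ha b hb =>
    mul_mem (mul_mem (mul_mem ha hb) (inv_mem ha)) (inv_mem hb)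

theorem derivedSeries_le_of_le {k n : ℕ} (h : k ≤ n) :
    derivedSeries G n ≤ derivedSeries G k := by
  induction n with
  | zero => simp_all
  | succ n ih =>
    rcases Nat.lt_or_ge k (n+1) with h' | h'
    · exact (derivedSeries_succ_le n).trans (ih (Nat.lt_succ_iff.mp h'))
    · have : k = n+1 := le_antisymm h h'
      subst this; rfl

/-- If the image has derived length `≤ a` and the kernel has derived length `≤ b`,
then the group has derived length `≤ a + b`. -/
theorem derivedSeries_eq_bot_of_ker {Q : Type*} [Group Q] (f : G →* Q) (a b : ℕ)
    (hQ : derivedSeries Q a = ⊥) (hK : derivedSeries f.ker b = ⊥) :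
    derivedSeries G (a + b) = ⊥ := by
  have h1 : derivedSeries G a ≤ f.ker := by
    intro x hx
    have : f x ∈ (derivedSeries G a).map f := Subgroup.mem_map_of_mem f hx
    have := map_derivedSeries_le_derivedSeries f a this
    rw [hQ, Subgroup.mem_bot] at this
    exact this
  have h2 : ∀ k, derivedSeries G (a + k) ≤ (derivedSeries f.ker k).map f.ker.subtype := by
    intro k
    induction k with
    | zero =>
      rw [derivedSeries_zero, ← MonoidHom.range_eq_map, Subgroup.range_subtype]; exact h1
    | succ k ih =>
      calc derivedSeries G (a + (k+1)) = ⁅derivedSeries G (a+k), derivedSeries G (a+k)⁆ :=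
            derivedSeries_succ G (a+k)
        _ ≤ ⁅(derivedSeries f.ker k).map f.ker.subtype, (derivedSeries f.ker k).map f.ker.subtype⁆ :=
            Subgroup.commutator_mono ih ih
        _ = (derivedSeries f.ker (k+1)).map f.ker.subtype := by
            rw [derivedSeries_succ, Subgroup.map_commutator]
  have := h2 b
  rw [hK, Subgroup.map_bot] at this
  exact le_bot_iff.mp this

/-- Lower bound transfer: if every element of `G` is the image under `χ` of an element of a
subgroup `N` lying in `derivedSeries W m`, then nontriviality of derived series transfers. -/
theorem derivedSeries_ne_bot_of_surj {W : Type*} [Group W] (N : Subgroup W) (χ : N →* G)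
    (m : ℕ) (h0 : ∀ g : G, ∃ x : N, (x : W) ∈ derivedSeries W m ∧ χ x = g)
    {k : ℕ} (hk : derivedSeries G k ≠ ⊥) : derivedSeries W (m + k) ≠ ⊥ := by
  have key : ∀ j, derivedSeries G j ≤
      ((derivedSeries W (m + j)).comap N.subtype).map χ := by
    intro j
    induction j with
    | zero =>
      intro g _
      obtain ⟨x, hx, hcx⟩ := h0 g
      exact ⟨x, hx, hcx⟩
    | succ j ih =>
      have hcomm : ⁅(derivedSeries W (m + j)).comap N.subtype,
          (derivedSeries W (m + j)).comap N.subtype⁆ ≤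
          (derivedSeries W (m + (j+1))).comap N.subtype := by
        refine Subgroup.commutator_le.mpr fun x hx y hy => ?_
        have : ((⁅x, y⁆ : N) : W) = ⁅(x : W), (y : W)⁆ := rfl
        simp only [Subgroup.mem_comap, this]
        exact Subgroup.commutator_mem_commutator hx hy
      calc derivedSeries G (j+1) = ⁅derivedSeries G j, derivedSeries G j⁆ := derivedSeries_succ G j
        _ ≤ ⁅((derivedSeries W (m + j)).comap N.subtype).map χ,
            ((derivedSeries W (m + j)).comap N.subtype).map χ⁆ := Subgroup.commutator_mono ih ih
        _ = (⁅(derivedSeries W (m + j)).comap N.subtype,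
            (derivedSeries W (m + j)).comap N.subtype⁆).map χ := (Subgroup.map_commutator _ _ _).symm
        _ ≤ _ := Subgroup.map_mono hcomm
  intro hbot
  apply hk
  have := key k
  rw [hbot] at this
  have hcb : Subgroup.comap N.subtype (⊥ : Subgroup W) = ⊥ := by
    ext x; simp [Subgroup.mem_comap]
  rw [hcb, Subgroup.map_bot] at this
  exact le_bot_iff.mp this

/-- Transfer of derived-series-triviality along a surjective homomorphism. -/
theorem derivedSeries_eq_bot_of_mulEquiv {G' : Type*} [Group G'] (e : G ≃* G') (n : ℕ)
    (h : derivedSeries G n = ⊥) : derivedSeries G' n = ⊥ := by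
  rw [← map_derivedSeries_eq (G' := G') (f := e.toMonoidHom) e.surjective n, h, Subgroup.map_bot]

/-- Derived series of a finite product of copies of `G`. -/
theorem derivedSeries_pi_eq_bot {ι : Type*} {n : ℕ}
    (h : derivedSeries G n = ⊥) : derivedSeries (ι → G) n = ⊥ := by
  rw [eq_bot_iff]
  intro f hf
  rw [Subgroup.mem_bot]
  funext v
  have : (Pi.evalMonoidHom (fun _ : ι => G) v) f ∈
      (derivedSeries (ι → G) n).map (Pi.evalMonoidHom (fun _ : ι => G) v) :=
    Subgroup.mem_map_of_mem _ hf
  have := map_derivedSeries_le_derivedSeries _ n this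
  rw [h, Subgroup.mem_bot] at this
  exact this


open SemidirectProduct

/-- commutator of a base element with a top element in a semidirect product -/
theorem sd_comm {N G : Type*} [Group N] [Group G] (φ : G →* MulAut N) (n : N) (g : G) :
    ⁅(inl n : N ⋊[φ] G), (inr g : N ⋊[φ] G)⁆ = inl (n * φ g n⁻¹) := by
  rw [commutatorElement_def, ← map_inv, ← map_inv]
  ext
  · simp [mul_left]
  · simp [mul_right]

/-- a semidirect product is equivalent (as a type) to the product -/
def sdEquivProd {N G : Type*} [Group N] [Group G] (φ : G →* MulAut N) :
    (N ⋊[φ] G) ≃ N × G where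
  toFun x := (x.left, x.right)
  invFun p := ⟨p.1, p.2⟩
  left_inv x := rfl
  right_inv p := rfl

/-- if the base is abelian, the kernel of `rightHom` has abelian derived series -/
theorem sd_ker_abelian {N G : Type*} [Group N] [Group G] (φ : G →* MulAut N)
    (hN : ∀ a b : N, a * b = b * a) :
    derivedSeries (rightHom (N := N) (G := G) (φ := φ)).ker 1 = ⊥ := by
  rw [eq_bot_iff]
  refine le_trans (le_of_eq (derivedSeries_succ _ 0)) ?_
  rw [derivedSeries_zero, Subgroup.commutator_le]
  intro x _ y _
  rw [Subgroup.mem_bot]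
  refine commutatorElement_eq_one_iff_commute.mpr ?_
  have hx : (x : N ⋊[φ] G).right = 1 := x.2
  have hy : (y : N ⋊[φ] G).right = 1 := y.2
  refine Subtype.ext ?_
  show (x : N ⋊[φ] G) * (y : N ⋊[φ] G) = (y : N ⋊[φ] G) * (x : N ⋊[φ] G)
  ext
  · rw [mul_left, mul_left, hx, hy, map_one, MulAut.one_apply, MulAut.one_apply]
    exact hN _ _
  · rw [mul_right, mul_right, hx, hy]

abbrev V2 := Fin 2 → F3

def mvAut (g : GLM) : MulAut (Multiplicative V2) where
  toFun v := Multiplicative.ofAdd (g.val.mulVec v.toAdd)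
  invFun v := Multiplicative.ofAdd (g.inv.mulVec v.toAdd)
  left_inv v := by
    show Multiplicative.ofAdd (g.inv.mulVec (g.val.mulVec v.toAdd)) = v
    rw [Matrix.mulVec_mulVec, g.inv_val, Matrix.one_mulVec]
    exact ofAdd_toAdd v
  right_inv v := by
    show Multiplicative.ofAdd (g.val.mulVec (g.inv.mulVec v.toAdd)) = v
    rw [Matrix.mulVec_mulVec, g.val_inv, Matrix.one_mulVec]
    exact ofAdd_toAdd v
  map_mul' v w := by
    show Multiplicative.ofAdd (g.val.mulVec (v.toAdd + w.toAdd)) = _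
    rw [Matrix.mulVec_add]
    rfl

def φH : GLM →* MulAut (Multiplicative V2) where
  toFun := mvAut
  map_one' := by
    refine MulEquiv.ext fun v => ?_
    show Multiplicative.ofAdd ((1 : GLM).val.mulVec v.toAdd) = v
    rw [Units.val_one, Matrix.one_mulVec]
    exact ofAdd_toAdd v
  map_mul' g h := by
    refine MulEquiv.ext fun v => ?_
    show Multiplicative.ofAdd ((g * h).val.mulVec v.toAdd) = _
    rw [Units.val_mul, ← Matrix.mulVec_mulVec]
    rfl

abbrev HH := Multiplicative V2 ⋊[φH] GLM

def ι (v : V2) : HH := inl (Multiplicative.ofAdd v)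

theorem hneg_mulVec (w : V2) : gneg.val.mulVec w = -w := by
  funext i
  show (!![2,0;0,2] : Mat).mulVec w i = -w i
  fin_cases i <;>
    simp [Matrix.mulVec, dotProduct, Fin.sum_univ_two] <;>
    · rw [show ((2:F3) = -1) from rfl]; ring

theorem iota_comm (v : V2) : ⁅ι (-v), inr gneg⁆ = ι v := by
  rw [ι, ι, sd_comm]
  congr 1
  show Multiplicative.ofAdd (-v) * φH gneg (Multiplicative.ofAdd (-v))⁻¹ = _
  rw [← ofAdd_neg, neg_neg]
  show Multiplicative.ofAdd (-v) * Multiplicative.ofAdd (gneg.val.mulVec v) = _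
  rw [hneg_mulVec, ← ofAdd_add]
  congr 1
  funext i
  have : ∀ x : F3, -x + -x = x := by decide
  exact this (v i)

theorem inr_mem_dHH {g : GLM} {k : ℕ} (h : g ∈ derivedSeries GLM k) :
    (inr g : HH) ∈ derivedSeries HH k :=
  map_derivedSeries_le_derivedSeries (inr : GLM →* HH) k (Subgroup.mem_map_of_mem _ h)

theorem iota_mem : ∀ k, k ≤ 4 → ∀ v : V2, ι v ∈ derivedSeries HH k := by
  intro k
  induction k with
  | zero => intro _ v; exact Subgroup.mem_top _
  | succ k ih =>
    intro hk v
    rw [← iota_comm v]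
    exact Subgroup.commutator_mem_commutator (ih (by omega) (-v))
      (inr_mem_dHH (derivedSeries_le_of_le (by omega) gneg_mem))

theorem h_d5 : derivedSeries HH 5 = ⊥ :=
  derivedSeries_eq_bot_of_ker rightHom 4 1 gl_d4 (sd_ker_abelian φH mul_comm)

theorem h_d4_ne : derivedSeries HH 4 ≠ ⊥ := by
  intro hbot
  have := iota_mem 4 le_rfl ![1, 0]
  rw [hbot, Subgroup.mem_bot] at this
  have : Multiplicative.ofAdd (![1,0] : V2) = 1 := inl_injective this
  have : (![1,0] : V2) = 0 := this
  have : (![1,0] : V2) 0 = 0 := congrFun this 0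
  simp at this


open SemidirectProduct

variable (G : Type) [Group G]

/-- translation automorphism of the pi group -/
def transAut (v : V2) : MulAut (V2 → G) where
  toFun f := fun u => f (u + v)
  invFun f := fun u => f (u - v)
  left_inv f := by funext u; simp
  right_inv f := by funext u; simp
  map_mul' f g := rfl

def φWtrans : Multiplicative V2 →* MulAut (V2 → G) where
  toFun v := transAut G v.toAdd
  map_one' := by
    refine MulEquiv.ext fun f => funext fun u => ?_
    show f (u + 0) = f u
    rw [add_zero]
  map_mul' v w := by
    refine MulEquiv.ext fun f => funext fun u => ?_
    show f (u + (v.toAdd + w.toAdd)) = f (u + v.toAdd + w.toAdd)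
    rw [add_assoc]

def linAut (g : GLM) : MulAut (V2 → G) where
  toFun f := fun u => f (g.inv.mulVec u)
  invFun f := fun u => f (g.val.mulVec u)
  left_inv f := by
    funext u
    show f (g.inv.mulVec (g.val.mulVec u)) = f u
    rw [Matrix.mulVec_mulVec, g.inv_val, Matrix.one_mulVec]
  right_inv f := by
    funext u
    show f (g.val.mulVec (g.inv.mulVec u)) = f u
    rw [Matrix.mulVec_mulVec, g.val_inv, Matrix.one_mulVec]
  map_mul' f h := rfl

def φWlin : GLM →* MulAut (V2 → G) where
  toFun := linAut G
  map_one' := by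
    refine MulEquiv.ext fun f => funext fun u => ?_
    show f ((1 : GLM).inv.mulVec u) = f u
    rw [show (1 : GLM).inv = (1 : Mat) from rfl, Matrix.one_mulVec]
  map_mul' g h := by
    refine MulEquiv.ext fun f => funext fun u => ?_
    show f ((g * h).inv.mulVec u) = f (h.inv.mulVec (g.inv.mulVec u))
    rw [show (g * h).inv = h.inv * g.inv from rfl, Matrix.mulVec_mulVec]

theorem φW_compat : ∀ h : GLM, (φWtrans G).comp (φH h).toMonoidHom =
    (MulAut.conj (φWlin G h)).toMonoidHom.comp (φWtrans G) := by
  intro h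
  refine MonoidHom.ext fun v => MulEquiv.ext fun f => funext fun u => ?_
  show f (u + h.val.mulVec v.toAdd) = f (h.val.mulVec (h.inv.mulVec u + v.toAdd))
  rw [Matrix.mulVec_add, Matrix.mulVec_mulVec, h.val_inv, Matrix.one_mulVec]

def φW : HH →* MulAut (V2 → G) := SemidirectProduct.lift (φWtrans G) (φWlin G) (φW_compat G)

abbrev WW := (V2 → G) ⋊[φW G] HH

theorem phiW_mk (v : V2) (m : GLM) (f : V2 → G) (u : V2) :
    φW G (⟨Multiplicative.ofAdd v, m⟩ : HH) f u = f (m.inv.mulVec (u + v)) := rfl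

/-! ### The explicit chain of elements -/

def tblF (l : List (List ℤ)) : V2 → ℤ := fun u => ((l.getD (u 0).val []).getD (u 1).val 0)

def c0 : V2 → ℤ := tblF [[-1, 0, 0], [0, 0, 0], [0, 0, 0]]
def c1 : V2 → ℤ := tblF [[-1, 0, 0], [1, 0, 0], [0, 0, 0]]
def c2 : V2 → ℤ := tblF [[-1, 0, 1], [1, 0, 0], [0, -1, 0]]
def c3 : V2 → ℤ := tblF [[-1, 0, 0], [2, 0, 0], [0, -2, 1]]
def c4 : V2 → ℤ := tblF [[-1, -2, 0], [1, 0, 2], [0, -1, 1]]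
def c5 : V2 → ℤ := tblF [[-2, -2, 1], [1, 1, 4], [-2, -2, 1]]

def hh1 : HH := ⟨Multiplicative.ofAdd ![2,0], gm1⟩
def hh2 : HH := ⟨Multiplicative.ofAdd ![0,1], gm2⟩
def hh3 : HH := ⟨Multiplicative.ofAdd ![1,1], 1⟩
def hh4 : HH := ⟨Multiplicative.ofAdd ![1,2], 1⟩
def hh5 : HH := ⟨Multiplicative.ofAdd ![2,2], 1⟩

theorem hh1_mem : hh1 ∈ derivedSeries HH 0 := Subgroup.mem_top _
theorem hh2_mem : hh2 ∈ derivedSeries HH 1 := by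
  rw [hh2, mk_eq_inl_mul_inr]
  exact mul_mem (iota_mem 1 (by omega) _) (inr_mem_dHH gm2_mem)
theorem hh3_mem : hh3 ∈ derivedSeries HH 2 := by
  rw [hh3, mk_eq_inl_mul_inr, map_one, mul_one]
  exact iota_mem 2 (by omega) _
theorem hh4_mem : hh4 ∈ derivedSeries HH 3 := by
  rw [hh4, mk_eq_inl_mul_inr, map_one, mul_one]
  exact iota_mem 3 (by omega) _
theorem hh5_mem : hh5 ∈ derivedSeries HH 4 := by
  rw [hh5, mk_eq_inl_mul_inr, map_one, mul_one]
  exact iota_mem 4 (by omega) _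

variable {G}

/-- the function `u ↦ g ^ c u` -/
def pw (c : V2 → ℤ) (g : G) : V2 → G := fun u => g ^ (c u)

theorem step_mem {f : V2 → G} {h : HH} {k : ℕ}
    (hf : (inl f : WW G) ∈ derivedSeries (WW G) k) (hh : h ∈ derivedSeries HH k) :
    (inl (f * φW G h f⁻¹) : WW G) ∈ derivedSeries (WW G) (k + 1) := by
  rw [← sd_comm (φW G) f h]
  refine Subgroup.commutator_mem_commutator hf ?_
  exact map_derivedSeries_le_derivedSeries (inr : HH →* WW G) k (Subgroup.mem_map_of_mem _ hh)

theorem pw_step (cA cB : V2 → ℤ) (v : V2) (m : GLM)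
    (hid : ∀ u : V2, cB u = cA u - cA (m.inv.mulVec (u + v))) (g : G) :
    pw cB g = pw cA g * φW G (⟨Multiplicative.ofAdd v, m⟩ : HH) (pw cA g)⁻¹ := by
  funext u
  show g ^ cB u = g ^ cA u * (φW G (⟨Multiplicative.ofAdd v, m⟩ : HH) (pw cA g)⁻¹) u
  have : (φW G (⟨Multiplicative.ofAdd v, m⟩ : HH) (pw cA g)⁻¹) u
      = (g ^ cA (m.inv.mulVec (u + v)))⁻¹ := by
    rw [phiW_mk]
    rfl
  rw [this, hid u, zpow_sub]

theorem pw5_mem (g : G) : (inl (pw c5 g) : WW G) ∈ derivedSeries (WW G) 5 := by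
  have s1 : pw c1 g = pw c0 g * φW G hh1 (pw c0 g)⁻¹ :=
    pw_step c0 c1 ![2,0] gm1 (by decide) g
  have s2 : pw c2 g = pw c1 g * φW G hh2 (pw c1 g)⁻¹ :=
    pw_step c1 c2 ![0,1] gm2 (by decide) g
  have s3 : pw c3 g = pw c2 g * φW G hh3 (pw c2 g)⁻¹ :=
    pw_step c2 c3 ![1,1] 1 (by decide) g
  have s4 : pw c4 g = pw c3 g * φW G hh4 (pw c3 g)⁻¹ :=
    pw_step c3 c4 ![1,2] 1 (by decide) g
  have s5 : pw c5 g = pw c4 g * φW G hh5 (pw c4 g)⁻¹ :=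
    pw_step c4 c5 ![2,2] 1 (by decide) g
  have m0 : (inl (pw c0 g) : WW G) ∈ derivedSeries (WW G) 0 := Subgroup.mem_top _
  have m1 := s1 ▸ step_mem m0 hh1_mem
  have m2 := s2 ▸ step_mem m1 hh2_mem
  have m3 := s3 ▸ step_mem m2 hh3_mem
  have m4 := s4 ▸ step_mem m3 hh4_mem
  exact s5 ▸ step_mem m4 hh5_mem

/-! ### kernel equivalence and the two bounds -/

/-- the base embeds as the kernel of `rightHom` -/
def sdKerEquiv {N Q : Type*} [Group N] [Group Q] (φ : Q →* MulAut N) :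
    N ≃* (rightHom (N := N) (G := Q) (φ := φ)).ker where
  toFun n := ⟨inl n, by rw [MonoidHom.mem_ker, rightHom_inl]⟩
  invFun x := (x : N ⋊[φ] Q).left
  left_inv n := rfl
  right_inv x := by
    refine Subtype.ext ?_
    have hx : (x : N ⋊[φ] Q).right = 1 := x.2
    ext
    · rfl
    · rw [right_inl, hx]
  map_mul' a b := by
    refine Subtype.ext ?_
    show inl (a * b) = inl a * inl b
    rw [map_mul]

instance sdFinite {N Q : Type*} [Group N] [Group Q] (φ : Q →* MulAut N)
    [Finite N] [Finite Q] : Finite (N ⋊[φ] Q) :=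
  Finite.of_equiv _ (sdEquivProd φ).symm

variable (G)

/-- upper bound -/
theorem ww_upper {n : ℕ} (h : derivedSeries G n = ⊥) : derivedSeries (WW G) (5 + n) = ⊥ := by
  refine derivedSeries_eq_bot_of_ker rightHom 5 n h_d5 ?_
  exact derivedSeries_eq_bot_of_mulEquiv (sdKerEquiv (φW G)) n (derivedSeries_pi_eq_bot h)

def χW : (rightHom (N := V2 → G) (G := HH) (φ := φW G)).ker →* G :=
  (Pi.evalMonoidHom (fun _ : V2 => G) ![0,2]).comp (sdKerEquiv (φW G)).symm.toMonoidHom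

/-- lower bound -/
theorem ww_lower {k : ℕ} (h : derivedSeries G k ≠ ⊥) : derivedSeries (WW G) (5 + k) ≠ ⊥ := by
  refine derivedSeries_ne_bot_of_surj _ (χW G) 5 ?_ h
  intro g
  have hmem : (inl (pw c5 g) : WW G) ∈ (rightHom (N := V2 → G) (G := HH) (φ := φW G)).ker := by
    rw [MonoidHom.mem_ker, rightHom_inl]
  refine ⟨⟨inl (pw c5 g), hmem⟩, pw5_mem g, ?_⟩
  have : χW G ⟨inl (pw c5 g), hmem⟩ = pw c5 g ![0,2] := rfl
  rw [this]
  show g ^ c5 ![0,2] = g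
  rw [show c5 ![0,2] = 1 from by decide, zpow_one]

/-- cardinality -/
theorem ww_card [Finite G] : Nat.card (WW G) = (Nat.card G) ^ 9 * 432 := by
  have h1 : Nat.card (WW G) = Nat.card (V2 → G) * Nat.card HH := by
    rw [Nat.card_congr (sdEquivProd (φW G)), Nat.card_prod]
  have h2 : Nat.card HH = Nat.card (Multiplicative V2) * Nat.card GLM := by
    rw [Nat.card_congr (sdEquivProd φH), Nat.card_prod]
  have h3 : Nat.card GLM = 48 := by
    rw [Matrix.card_GL_field]
    simp [ZMod.card]
  have h4 : Nat.card (Multiplicative V2) = 9 := by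
    rw [Nat.card_eq_fintype_card]
    decide
  have h5 : Nat.card (V2 → G) = Nat.card G ^ 9 := by
    rw [Nat.card_fun]
    norm_num [Nat.card_eq_fintype_card]
  rw [h1, h2, h3, h4, h5]


open Equiv

theorem dser_ne_bot {G : Type*} [Group G] {n : ℕ} (x y : G) (hx : x ∈ derivedSeries G n)
    (hy : y ∈ derivedSeries G n) (hne : ⁅x, y⁆ ≠ 1) : derivedSeries G (n + 1) ≠ ⊥ := by
  intro h
  have := Subgroup.commutator_mem_commutator hx hy
  rw [← derivedSeries_succ, h, Subgroup.mem_bot] at this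
  exact hne this

-- d = 1 : Perm (Fin 2)
theorem p2_d1 : derivedSeries (Perm (Fin 2)) 1 = ⊥ := by
  rw [eq_bot_iff]
  refine le_trans (le_of_eq (derivedSeries_succ _ 0)) ?_
  rw [derivedSeries_zero, Subgroup.commutator_le]
  intro x hx y hy
  clear hx hy
  rw [Subgroup.mem_bot]
  revert x y
  decide

theorem p2_d0 : derivedSeries (Perm (Fin 2)) 0 ≠ ⊥ := by
  rw [derivedSeries_zero]
  intro h
  have : Equiv.swap (0 : Fin 2) 1 ∈ (⊥ : Subgroup (Perm (Fin 2))) := h ▸ Subgroup.mem_top _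
  rw [Subgroup.mem_bot] at this
  exact absurd this (by decide)

-- d = 2 : Perm (Fin 3)
def A3p (x : Perm (Fin 3)) : Prop :=
  x = 1 ∨ x = Equiv.swap 0 1 * Equiv.swap 1 2 ∨ x = Equiv.swap 1 2 * Equiv.swap 0 1
instance : DecidablePred A3p := fun _ => by unfold A3p; infer_instance

def A3 : Subgroup (Perm (Fin 3)) where
  carrier := {x | A3p x}
  one_mem' := by left; rfl
  mul_mem' := by intro a b ha hb; revert a b; decide
  inv_mem' := by intro a ha; revert a; decide

theorem p3_d1 : derivedSeries (Perm (Fin 3)) 1 ≤ A3 := by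
  refine le_trans (le_of_eq (derivedSeries_succ _ 0)) ?_
  rw [derivedSeries_zero, Subgroup.commutator_le]
  intro x hx y hy
  clear hx hy
  show A3p ⁅x, y⁆
  revert x y
  decide

theorem p3_d2 : derivedSeries (Perm (Fin 3)) 2 = ⊥ := by
  rw [eq_bot_iff]
  refine le_trans (le_of_eq (derivedSeries_succ _ 1)) ?_
  refine le_trans (Subgroup.commutator_mono p3_d1 p3_d1) (Subgroup.commutator_le.mpr ?_)
  intro x hx y hy
  rw [Subgroup.mem_bot]
  have hx' : A3p x := hx
  have hy' : A3p y := hy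
  clear hx hy
  revert hx' hy'
  revert x y
  decide

theorem p3_d1_ne : derivedSeries (Perm (Fin 3)) 1 ≠ ⊥ :=
  dser_ne_bot (Equiv.swap 0 1) (Equiv.swap 0 2) (Subgroup.mem_top _) (Subgroup.mem_top _)
    (by decide)

-- d = 3 : Perm (Fin 4)
def A4p (x : Perm (Fin 4)) : Prop := Perm.sign x = 1
instance : DecidablePred A4p := fun _ => by unfold A4p; infer_instance

def V4p (x : Perm (Fin 4)) : Prop :=
  x = 1 ∨ x = Equiv.swap 0 1 * Equiv.swap 2 3 ∨ x = Equiv.swap 0 2 * Equiv.swap 1 3 ∨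
    x = Equiv.swap 0 3 * Equiv.swap 1 2
instance : DecidablePred V4p := fun _ => by unfold V4p; infer_instance

def V4 : Subgroup (Perm (Fin 4)) where
  carrier := {x | V4p x}
  one_mem' := by left; rfl
  mul_mem' := by intro a b ha hb; revert a b; decide
  inv_mem' := by intro a ha; revert a; decide

def A4 : Subgroup (Perm (Fin 4)) := (Perm.sign (α := Fin 4)).ker

theorem p4_d1 : derivedSeries (Perm (Fin 4)) 1 ≤ A4 := by
  refine le_trans (le_of_eq (derivedSeries_succ _ 0)) ?_
  rw [derivedSeries_zero, Subgroup.commutator_le]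
  intro x _ y _
  rw [A4, MonoidHom.mem_ker, map_commutatorElement]
  exact commutatorElement_eq_one_iff_commute.mpr (mul_comm _ _)

theorem p4_d2 : derivedSeries (Perm (Fin 4)) 2 ≤ V4 := by
  refine le_trans (le_of_eq (derivedSeries_succ _ 1)) ?_
  refine le_trans (Subgroup.commutator_mono p4_d1 p4_d1) (Subgroup.commutator_le.mpr ?_)
  intro x hx y hy
  have hx' : Perm.sign x = 1 := hx
  have hy' : Perm.sign y = 1 := hy
  clear hx hy
  show V4p ⁅x, y⁆
  revert hx' hy'
  revert x y
  decide

theorem p4_d3 : derivedSeries (Perm (Fin 4)) 3 = ⊥ := by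
  rw [eq_bot_iff]
  refine le_trans (le_of_eq (derivedSeries_succ _ 2)) ?_
  refine le_trans (Subgroup.commutator_mono p4_d2 p4_d2) (Subgroup.commutator_le.mpr ?_)
  intro x hx y hy
  rw [Subgroup.mem_bot]
  have hx' : V4p x := hx
  have hy' : V4p y := hy
  clear hx hy
  revert hx' hy'
  revert x y
  decide

theorem p4_d2_ne : derivedSeries (Perm (Fin 4)) 2 ≠ ⊥ := by
  have hmem : ∀ a b : Perm (Fin 4), ⁅a, b⁆ ∈ derivedSeries (Perm (Fin 4)) 1 := by
    intro a b
    rw [derivedSeries_succ]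
    exact Subgroup.commutator_mem_commutator (Subgroup.mem_top _) (Subgroup.mem_top _)
  exact dser_ne_bot ⁅Equiv.swap 0 1, Equiv.swap 0 2⁆ ⁅Equiv.swap 0 1, Equiv.swap 0 3⁆
    (hmem _ _) (hmem _ _) (by decide)

-- d = 4 : GLM
theorem gl_d3_ne : derivedSeries GLM 3 ≠ ⊥ := by
  intro h
  have := gneg_mem
  rw [h, Subgroup.mem_bot] at this
  have := congrArg Units.val this
  revert this
  decide


def Omega' (n : ℕ) : ℕ := n.primeFactorsList.length

theorem Omega'_mul {a b : ℕ} (ha : a ≠ 0) (hb : b ≠ 0) :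
    Omega' (a * b) = Omega' a + Omega' b := by
  have := (Nat.perm_primeFactorsList_mul ha hb).length_eq
  rw [List.length_append] at this
  exact this

theorem Omega'_prime {p : ℕ} (hp : Nat.Prime p) : Omega' p = 1 := by
  rw [Omega', Nat.primeFactorsList_prime hp]
  rfl

theorem Omega'_pow {a : ℕ} (ha : a ≠ 0) (n : ℕ) : Omega' (a ^ n) = n * Omega' a := by
  induction n with
  | zero => simp [Omega']
  | succ n ih =>
    rw [pow_succ, Omega'_mul (pow_ne_zero n ha) ha, ih]
    ring

theorem Omega'_2 : Omega' 2 = 1 := Omega'_prime (by norm_num)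
theorem Omega'_3 : Omega' 3 = 1 := Omega'_prime (by norm_num)

theorem Omega'_6 : Omega' 6 = 2 := by
  rw [show (6:ℕ) = 2 * 3 from rfl, Omega'_mul (by norm_num) (by norm_num), Omega'_2, Omega'_3]

theorem Omega'_24 : Omega' 24 = 4 := by
  rw [show (24:ℕ) = 2^3 * 3 by norm_num, Omega'_mul (by norm_num) (by norm_num),
    Omega'_pow (by norm_num), Omega'_2, Omega'_3]

theorem Omega'_48 : Omega' 48 = 5 := by
  rw [show (48:ℕ) = 2^4 * 3 by norm_num, Omega'_mul (by norm_num) (by norm_num),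
    Omega'_pow (by norm_num), Omega'_2, Omega'_3]

theorem Omega'_432 : Omega' 432 = 7 := by
  rw [show (432:ℕ) = 2^4 * 3^3 by norm_num, Omega'_mul (by norm_num) (by norm_num),
    Omega'_pow (by norm_num) 4, Omega'_pow (by norm_num) 3, Omega'_2, Omega'_3]

/-- key real inequality helper: `r ≤ 9 ^ (k/5)` provided `r^5 ≤ 9^k`. -/
theorem rpow_bound {r : ℝ} (hr : 0 ≤ r) {k : ℕ} (h : r ^ (5:ℕ) ≤ (9:ℝ) ^ (k:ℕ)) :
    r ≤ (9:ℝ) ^ ((k : ℝ) / 5) := by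
  have h9 : (0:ℝ) < 9 := by norm_num
  have hpos : (0:ℝ) ≤ (9:ℝ) ^ ((k : ℝ) / 5) := (Real.rpow_pos_of_pos h9 _).le
  have h5 : ((9:ℝ) ^ ((k : ℝ) / 5)) ^ (5:ℕ) = (9:ℝ) ^ (k:ℕ) := by
    rw [← Real.rpow_natCast ((9:ℝ) ^ ((k : ℝ) / 5)) 5, ← Real.rpow_mul h9.le,
      show (k:ℝ)/5*(5:ℕ) = (k:ℕ) by push_cast; ring, Real.rpow_natCast]
  by_contra hc
  push_neg at hc
  have := pow_lt_pow_left₀ hc hpos (by norm_num : (5:ℕ) ≠ 0)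
  rw [h5] at this
  linarith

theorem Omega_eq : Omega = Omega' := rfl

theorem dle_intro {X : Type*} [Group X] {d : ℕ} (hd : 1 ≤ d) (h1 : derivedSeries X d = ⊥)
    (h2 : derivedSeries X (d-1) ≠ ⊥) : DerivedLengthEq X d := by
  refine ⟨h1, fun k hk hbot => h2 ?_⟩
  exact le_bot_iff.mp (hbot ▸ derivedSeries_le_of_le (by omega))

def GoodP (d : ℕ) : Prop :=
  ∃ (G : Type) (_ : Group G) (_ : Finite G), DerivedLengthEq G d ∧
    (Omega (Nat.card G) : ℝ) ≤ (9:ℝ) ^ (((d:ℝ)+1)/5) - 7/8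

theorem good1 : GoodP 1 := by
  refine ⟨Equiv.Perm (Fin 2), inferInstance, inferInstance,
    dle_intro le_rfl p2_d1 p2_d0, ?_⟩
  have hc : Nat.card (Equiv.Perm (Fin 2)) = 2 := by
    rw [Nat.card_eq_fintype_card]; decide
  rw [hc, Omega_eq, Omega'_2]
  have := rpow_bound (by norm_num : (0:ℝ) ≤ 15/8) (k := 2) (by norm_num)
  push_cast
  linarith

theorem good2 : GoodP 2 := by
  refine ⟨Equiv.Perm (Fin 3), inferInstance, inferInstance,
    dle_intro (by norm_num) p3_d2 p3_d1_ne, ?_⟩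
  have hc : Nat.card (Equiv.Perm (Fin 3)) = 6 := by
    rw [Nat.card_eq_fintype_card]; decide
  rw [hc, Omega_eq, Omega'_6]
  have := rpow_bound (by norm_num : (0:ℝ) ≤ 23/8) (k := 3) (by norm_num)
  push_cast
  linarith

theorem good3 : GoodP 3 := by
  refine ⟨Equiv.Perm (Fin 4), inferInstance, inferInstance,
    dle_intro (by norm_num) p4_d3 p4_d2_ne, ?_⟩
  have hc : Nat.card (Equiv.Perm (Fin 4)) = 24 := by
    rw [Nat.card_eq_fintype_card]; decide
  rw [hc, Omega_eq, Omega'_24]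
  have := rpow_bound (by norm_num : (0:ℝ) ≤ 39/8) (k := 4) (by norm_num)
  push_cast
  linarith

theorem good4 : GoodP 4 := by
  refine ⟨GLM, inferInstance, inferInstance, dle_intro (by norm_num) gl_d4 gl_d3_ne, ?_⟩
  have hc : Nat.card GLM = 48 := by
    rw [Matrix.card_GL_field]
    simp [ZMod.card]
  rw [hc, Omega_eq, Omega'_48]
  have := rpow_bound (by norm_num : (0:ℝ) ≤ 47/8) (k := 5) (by norm_num)
  push_cast
  linarith

theorem hh_card : Nat.card HH = 432 := by
  have h2 : Nat.card HH = Nat.card (Multiplicative V2) * Nat.card GLM := by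
    rw [Nat.card_congr (sdEquivProd φH), Nat.card_prod]
  have h3 : Nat.card GLM = 48 := by
    rw [Matrix.card_GL_field]
    simp [ZMod.card]
  have h4 : Nat.card (Multiplicative V2) = 9 := by
    rw [Nat.card_eq_fintype_card]
    decide
  rw [h2, h3, h4]

theorem good5 : GoodP 5 := by
  refine ⟨HH, inferInstance, inferInstance, dle_intro (by norm_num) h_d5 h_d4_ne, ?_⟩
  rw [hh_card, Omega_eq, Omega'_432]
  have := rpow_bound (by norm_num : (0:ℝ) ≤ 63/8) (k := 6) (by norm_num)
  push_cast
  linarith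

theorem good_step (e : ℕ) (he : 1 ≤ e) (h : GoodP e) : GoodP (e + 5) := by
  obtain ⟨G, _, _, ⟨hup, hlow⟩, hnum⟩ := h
  have cardG_ne : Nat.card G ≠ 0 := Nat.card_pos.ne'
  refine ⟨WW G, inferInstance, inferInstance, ⟨?_, ?_⟩, ?_⟩
  · have := ww_upper G hup
    rwa [show (5 + e = e + 5) from by omega] at this
  · intro k hk hbot
    have h1 : derivedSeries G (e-1) ≠ ⊥ := hlow (e-1) (by omega)
    have h2 := ww_lower G h1
    rw [show (5 + (e-1) = e + 4) from by omega] at h2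
    exact h2 (le_bot_iff.mp (hbot ▸ derivedSeries_le_of_le (by omega)))
  · rw [ww_card G, Omega_eq, Omega'_mul (pow_ne_zero _ cardG_ne) (by norm_num),
      Omega'_pow cardG_ne, Omega'_432]
    rw [Omega_eq] at hnum
    have h9 : (9:ℝ) ^ (((((e:ℕ):ℝ)+5)+1)/5) = 9 * 9 ^ ((((e:ℕ):ℝ)+1)/5) := by
      rw [show (((((e:ℕ):ℝ))+5)+1)/5 = ((((e:ℕ):ℝ)+1)/5) + 1 by ring,
        Real.rpow_add_one (by norm_num)]
      ring
    push_cast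
    push_cast at hnum
    rw [h9]
    linarith

theorem goodP_all : ∀ d, 1 ≤ d → GoodP d := by
  intro d
  induction d using Nat.strong_induction_on with
  | _ d ih =>
    intro hd
    by_cases h5 : d ≤ 5
    · interval_cases d
      · exact good1
      · exact good2
      · exact good3
      · exact good4
      · exact good5
    · have hd5 : d = (d - 5) + 5 := by omega
      rw [hd5]
      exact good_step (d-5) (by omega) (ih (d-5) (by omega) (by omega))

/-- For every `d ≥ 1` there is a finite solvable group `G` of derived length exactly `d`
with `Ω(|G|) < 9^((d+1)/5)`. -/
theorem exists_solvable_comp_length_lt (d : ℕ) (hd : 1 ≤ d) :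
    ∃ (G : Type) (_ : Group G) (_ : Finite G), IsSolvable G ∧ DerivedLengthEq G d ∧
      (Omega (Nat.card G) : ℝ) < (9 : ℝ) ^ (((d : ℝ) + 1) / 5) := by
  obtain ⟨G, hG, hF, hdle, hnum⟩ := goodP_all d hd
  refine ⟨G, hG, hF, ⟨⟨d, hdle.1⟩⟩, hdle, ?_⟩
  have : (0:ℝ) < 7/8 := by norm_num
  linarith
end General
end

section
/- Let G be a nontrivial finite solvable group with derived length d such that Ω(|G|) ≤ Ω(|H|) for every finite solvable group H with derived length d (i.e., G has minimal composition length among solvable groups of derived length d). Then for every nontrivial normal subgroup N of G, the derived length of G/N is strictly less than d. -/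
/-- If `G` is a nontrivial finite solvable group of derived length `d` with minimal
composition length among all finite solvable groups of derived length `d`, then for every
nontrivial normal subgroup `N` of `G` the derived length of `G/N` is strictly less
than `d`. -/
theorem quotient_derived_length_lt_of_minimal (G : Type) [Group G] [Finite G] [Nontrivial G]
    (hG : IsSolvable G) (d : ℕ) (hd : DerivedLengthEq G d)
    (hmin : ∀ (H : Type) [Group H] [Finite H], IsSolvable H → DerivedLengthEq H d →
      Omega (Nat.card G) ≤ Omega (Nat.card H))
    (N : Subgroup G) [N.Normal] (hN : N ≠ ⊥) :
    ∃ k < d, derivedSeries (G ⧸ N) k = ⊥ := by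
  by_contra h
  push_neg at h
  have hsurj : Function.Surjective (QuotientGroup.mk' N) := QuotientGroup.mk'_surjective N
  have hQd : derivedSeries (G ⧸ N) d = ⊥ := by
    rw [← map_derivedSeries_eq hsurj, hd.1, Subgroup.map_bot]
  have hQ : DerivedLengthEq (G ⧸ N) d := ⟨hQd, h⟩
  have hle := hmin (G ⧸ N) (by haveI : Group.IsSolvable G := hG; exact Group.isSolvable_of_surjective (QuotientGroup.mk'_surjective N)) hQ
  -- card G = card (G⧸N) * card N
  have hcard : Nat.card G = Nat.card (G ⧸ N) * Nat.card N :=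
    (Subgroup.card_eq_card_quotient_mul_card_subgroup N)
  have hQpos : Nat.card (G ⧸ N) ≠ 0 := Nat.card_pos.ne'
  have hNpos : Nat.card N ≠ 0 := Nat.card_pos.ne'
  have hNtwo : 2 ≤ Nat.card N := by
    have : Nontrivial N := by
      rcases Subgroup.bot_or_nontrivial N with h' | h'
      · exact absurd h' hN
      · exact h'
    exact Finite.one_lt_card
  have hOmega : Omega (Nat.card G) = Omega (Nat.card (G ⧸ N)) + Omega (Nat.card N) := by
    unfold Omega
    rw [hcard, ← List.length_append]
    exact (Nat.perm_primeFactorsList_mul hQpos hNpos).length_eq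
  have hN1 : 1 ≤ Omega (Nat.card N) := by
    unfold Omega
    have : (Nat.card N).primeFactorsList ≠ [] := by
      intro he
      rcases (Nat.primeFactorsList_eq_nil _).mp he with h' | h' <;> omega
    exact List.length_pos_iff.mpr this
  omega
end

section
/- Let G be a nontrivial finite solvable group with derived length d such that Ω(|G|) ≤ Ω(|H|) for every finite solvable group H with derived length d (i.e., G has minimal composition length among solvable groups of derived length d). Then G has a unique minimal normal subgroup, and this subgroup is an elementary abelian p-group for some prime p. -/
/-- `N` is a minimal normal subgroup of `G`: it is a nontrivial normal subgroup and the
only normal subgroups of `G` contained in it are `⊥` and `N` itself. -/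
def IsMinimalNormal (G : Type*) [Group G] (N : Subgroup G) : Prop :=
  N.Normal ∧ N ≠ ⊥ ∧ ∀ M : Subgroup G, M.Normal → M ≤ N → M = ⊥ ∨ M = N

lemma derivedSeries_antitone' {H : Type*} [Group H] {k l : ℕ} (h : k ≤ l) :
    derivedSeries H l ≤ derivedSeries H k := by
  induction l with
  | zero => simp_all
  | succ n ih =>
    rcases Nat.lt_or_ge k (n + 1) with h' | h'
    · refine le_trans ?_ (ih (by omega))
      rw [derivedSeries_succ]
      haveI := derivedSeries_normal H n
      exact Subgroup.commutator_le_left _ _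
    · have : k = n + 1 := le_antisymm h h'
      subst this; rfl

lemma omega_pos_of_ne_bot {n : ℕ} (h1 : n ≠ 0) (h2 : n ≠ 1) : 1 ≤ Omega n := by
  rcases List.eq_nil_or_concat n.primeFactorsList with h | ⟨l, a, h⟩
  · exact absurd ((Nat.primeFactorsList_eq_nil n).mp h) (by tauto)
  · simp [Omega, h]

/-- If `G` is a nontrivial finite solvable group of derived length `d` with minimal
composition length among all finite solvable groups of derived length `d`, then `G` has a
unique minimal normal subgroup, and it is an elementary abelian `p`-group for some
prime `p` (a nontrivial abelian group of exponent `p`). -/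
theorem unique_minimal_normal_of_minimal (G : Type) [Group G] [Finite G] [Nontrivial G]
    (hG : IsSolvable G) (d : ℕ) (hd : DerivedLengthEq G d)
    (hmin : ∀ (H : Type) [Group H] [Finite H], IsSolvable H → DerivedLengthEq H d →
      Omega (Nat.card G) ≤ Omega (Nat.card H)) :
    (∃! N : Subgroup G, IsMinimalNormal G N) ∧
      ∀ N : Subgroup G, IsMinimalNormal G N →
        ∃ p : ℕ, p.Prime ∧ (∀ x ∈ N, x ^ p = 1) ∧ ∀ x ∈ N, ∀ y ∈ N, x * y = y * x := by
  obtain ⟨hdbot, hdne⟩ := hd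
  have hd1 : 1 ≤ d := by
    by_contra h
    have hd0 : d = 0 := by omega
    subst hd0
    rw [derivedSeries_zero] at hdbot
    exact (bot_ne_top (α := Subgroup G)) hdbot.symm
  set A := derivedSeries G (d - 1) with hA
  have hAne : A ≠ ⊥ := hdne _ (by omega)
  have hAnormal : A.Normal := derivedSeries_normal G (d - 1)
  have hAA : ⁅A, A⁆ = ⊥ := by
    have hdd : d = (d - 1) + 1 := by omega
    rw [hdd, derivedSeries_succ] at hdbot
    exact hdbot
  -- commutativity inside A
  have hAcomm : ∀ x ∈ A, ∀ y ∈ A, x * y = y * x := by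
    intro x hx y hy
    open commutatorElement in have : ⁅x, y⁆ ∈ (⊥ : Subgroup G) := hAA ▸ Subgroup.commutator_mem_commutator hx hy
    rw [Subgroup.mem_bot] at this
    exact commutatorElement_eq_one_iff_mul_comm.mp this
  -- key lemma: every nontrivial normal subgroup contains A
  have key : ∀ M : Subgroup G, M.Normal → M ≠ ⊥ → A ≤ M := by
    intro M hMn hMne
    by_contra hle
    haveI := hMn
    have hQsolv : IsSolvable (G ⧸ M) := by haveI : Group.IsSolvable G := hG; exact (inferInstance : Group.IsSolvable (G ⧸ M))
    have hmap : ∀ n, Subgroup.map (QuotientGroup.mk' M) (derivedSeries G n) =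
        derivedSeries (G ⧸ M) n := fun n =>
      map_derivedSeries_eq (QuotientGroup.mk'_surjective M) n
    have hQd : DerivedLengthEq (G ⧸ M) d := by
      constructor
      · rw [← hmap d, hdbot, Subgroup.map_bot]
      · intro k hk hkbot
        have h1 : derivedSeries (G ⧸ M) (d - 1) = ⊥ :=
          le_bot_iff.mp (hkbot ▸ derivedSeries_antitone' (by omega))
        rw [← hmap (d - 1), Subgroup.map_eq_bot_iff, QuotientGroup.ker_mk'] at h1
        exact hle h1
    have hle' := hmin (G ⧸ M) hQsolv hQd
    have hcard : Nat.card G = Nat.card (G ⧸ M) * Nat.card M :=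
      Subgroup.card_eq_card_quotient_mul_card_subgroup M
    have hq0 : Nat.card (G ⧸ M) ≠ 0 := Nat.card_pos.ne'
    have hm0 : Nat.card M ≠ 0 := Nat.card_pos.ne'
    have hm1 : Nat.card M ≠ 1 := by
      intro h
      exact hMne (Subgroup.eq_bot_of_card_eq M (by simp [h]))
    have hΩ : Omega (Nat.card G) = Omega (Nat.card (G ⧸ M)) + Omega (Nat.card M) := by
      rw [hcard]
      simpa [Omega, ArithmeticFunction.cardFactors_apply] using ArithmeticFunction.cardFactors_mul hq0 hm0
    have := omega_pos_of_ne_bot hm0 hm1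
    omega
  have hAmin : IsMinimalNormal G A := by
    refine ⟨hAnormal, hAne, fun M hMn hMle => ?_⟩
    by_cases h : M = ⊥
    · exact Or.inl h
    · exact Or.inr (le_antisymm hMle (key M hMn h))
  have huniq : ∀ N : Subgroup G, IsMinimalNormal G N → N = A := by
    intro N ⟨hNn, hNne, hNmin⟩
    rcases hNmin A hAnormal (key N hNn hNne) with h | h
    · exact absurd h hAne
    · exact h.symm
  constructor
  · exact ⟨A, hAmin, huniq⟩
  · intro N hN
    have hNA : N = A := huniq N hN
    obtain ⟨hNn, hNne, hNmin⟩ := hN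
    have hcN1 : Nat.card N ≠ 1 := by
      intro h
      exact hNne (Subgroup.eq_bot_of_card_eq N (by simp [h]))
    set p := (Nat.card N).minFac with hp
    have hpp : p.Prime := Nat.minFac_prime hcN1
    have hpd : p ∣ Nat.card N := Nat.minFac_dvd _
    haveI : Fact p.Prime := ⟨hpp⟩
    obtain ⟨x, hx⟩ := exists_prime_orderOf_dvd_card' (G := N) p hpd
    -- the subgroup of elements of N of order dividing p
    have hNcomm : ∀ x ∈ N, ∀ y ∈ N, x * y = y * x := by
      intro a ha b hb
      exact hAcomm a (hNA ▸ ha) b (hNA ▸ hb)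
    let P : Subgroup G :=
      { carrier := {g | g ∈ N ∧ g ^ p = 1}
        one_mem' := ⟨N.one_mem, one_pow p⟩
        mul_mem' := by
          rintro a b ⟨haN, hap⟩ ⟨hbN, hbp⟩
          refine ⟨N.mul_mem haN hbN, ?_⟩
          have hc : Commute a b := hNcomm a haN b hbN
          rw [hc.mul_pow, hap, hbp, one_mul]
        inv_mem' := by
          rintro a ⟨haN, hap⟩
          exact ⟨N.inv_mem haN, by rw [inv_pow, hap, inv_one]⟩ }
    have hPnormal : P.Normal := by
      constructor
      rintro a ⟨haN, hap⟩ g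
      refine ⟨hNn.conj_mem a haN g, ?_⟩
      rw [conj_pow, hap, mul_one, mul_inv_cancel]
    have hPne : P ≠ ⊥ := by
      intro h
      have hxP : (x : G) ∈ P := by
        refine ⟨x.2, ?_⟩
        have h1 : x ^ p = 1 := by rw [← hx, pow_orderOf_eq_one]
        have h2 : ((x ^ p : N) : G) = 1 := by rw [h1]; rfl
        simpa using h2
      rw [h, Subgroup.mem_bot] at hxP
      have : orderOf (x : G) = p := by
        rw [← hx]
        exact (Subgroup.orderOf_coe x)
      rw [hxP] at this
      simp only [orderOf_one] at this
      exact hpp.ne_one this.symm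
    have hPle : P ≤ N := fun g hg => hg.1
    rcases hNmin P hPnormal hPle with h | h
    · exact absurd h hPne
    · exact ⟨p, hpp, fun g hg => (h ▸ hg : g ∈ P).2, hNcomm⟩
end

section
/- Let p be a prime and let G be a finite p-group with derived length d > 1. Then Ω(|G|) ≥ 2^(d−1) + 1; that is, if |G| = p^c then c ≥ 2^(d−1) + 1. -/
open Subgroup
open commutatorElement

section Aux

variable {G : Type*} [Group G]

theorem lcs_succ' (n : ℕ) :
    (⊤ : Subgroup G).lowerCentralSeries (n + 1) = ⁅(⊤ : Subgroup G).lowerCentralSeries n, (⊤ : Subgroup G)⁆ := rfl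

/-- Three subgroups lemma, `≤ N` form. -/
theorem three_subgroups_le {A B C N : Subgroup G} [N.Normal]
    (h1 : ⁅⁅B, C⁆, A⁆ ≤ N) (h2 : ⁅⁅C, A⁆, B⁆ ≤ N) : ⁅⁅A, B⁆, C⁆ ≤ N := by
  let f := QuotientGroup.mk' N
  have key : ∀ {X Y Z : Subgroup G}, ⁅⁅X, Y⁆, Z⁆ ≤ N ↔
      ⁅⁅X.map f, Y.map f⁆, Z.map f⁆ = ⊥ := by
    intro X Y Z
    rw [← map_commutator, ← map_commutator, Subgroup.map_eq_bot_iff,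
      QuotientGroup.ker_mk']
  rw [key]
  exact Subgroup.commutator_commutator_eq_bot_of_rotate (key.mp h1) (key.mp h2)

theorem lcs_commutator_le :
    ∀ (j i : ℕ), ⁅(⊤ : Subgroup G).lowerCentralSeries i, (⊤ : Subgroup G).lowerCentralSeries j⁆ ≤
      (⊤ : Subgroup G).lowerCentralSeries (i + j + 1) := by
  intro j
  induction j with
  | zero =>
    intro i
    rw [Subgroup.lowerCentralSeries_zero]
    exact le_of_eq (lcs_succ' i).symm
  | succ j ih =>
    intro i
    have hLj : (⊤ : Subgroup G).lowerCentralSeries (j + 1) = ⁅(⊤ : Subgroup G).lowerCentralSeries j, (⊤ : Subgroup G)⁆ :=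
      lcs_succ' j
    rw [hLj, Subgroup.commutator_comm]
    refine three_subgroups_le (N := (⊤ : Subgroup G).lowerCentralSeries (i + (j + 1) + 1)) ?_ ?_
    · -- ⁅⁅⊤, L i⁆, L j⁆ ≤ L (i+j+2)
      rw [Subgroup.commutator_comm (⊤ : Subgroup G), ← lcs_succ']
      have := ih (i + 1)
      have harith : i + 1 + j + 1 = i + (j + 1) + 1 := by omega
      rwa [harith] at this
    · -- ⁅⁅L i, L j⁆, ⊤⁆ ≤ L (i+j+2)
      calc ⁅⁅(⊤ : Subgroup G).lowerCentralSeries i, (⊤ : Subgroup G).lowerCentralSeries j⁆, (⊤ : Subgroup G)⁆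
          ≤ ⁅(⊤ : Subgroup G).lowerCentralSeries (i + j + 1), (⊤ : Subgroup G)⁆ :=
            Subgroup.commutator_mono (ih i) le_rfl
        _ = (⊤ : Subgroup G).lowerCentralSeries (i + j + 2) := (lcs_succ' (i + j + 1)).symm
        _ ≤ (⊤ : Subgroup G).lowerCentralSeries (i + (j + 1) + 1) := by
            apply Subgroup.lowerCentralSeries_antitone; omega

theorem derivedSeries_le_lcs : ∀ k, derivedSeries G k ≤ (⊤ : Subgroup G).lowerCentralSeries (2 ^ k - 1) := by
  intro k
  induction k with
  | zero => simp
  | succ k ih =>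
    have h := (Subgroup.commutator_mono ih ih).trans (lcs_commutator_le _ _)
    have h1 : (1 : ℕ) ≤ 2 ^ k := Nat.one_le_two_pow
    have harith : (2 ^ k - 1) + (2 ^ k - 1) + 1 = 2 ^ (k + 1) - 1 := by
      rw [pow_succ]; omega
    rw [harith] at h
    exact h

theorem lcs_eq_bot_of_stable [hG : Group.IsNilpotent G] {n : ℕ}
    (h : (⊤ : Subgroup G).lowerCentralSeries n = (⊤ : Subgroup G).lowerCentralSeries (n + 1)) :
    (⊤ : Subgroup G).lowerCentralSeries n = ⊥ := by
  have key : ∀ m, (⊤ : Subgroup G).lowerCentralSeries (n + m) = (⊤ : Subgroup G).lowerCentralSeries n := by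
    intro m
    induction m with
    | zero => rfl
    | succ m ih =>
      have e : (⊤ : Subgroup G).lowerCentralSeries (n + (m + 1)) =
          ⁅(⊤ : Subgroup G).lowerCentralSeries (n + m), (⊤ : Subgroup G)⁆ := lcs_succ' (n + m)
      rw [e, ih, ← lcs_succ', ← h]
  refine le_bot_iff.mp ?_
  calc (⊤ : Subgroup G).lowerCentralSeries n = (⊤ : Subgroup G).lowerCentralSeries (n + Group.nilpotencyClass G) :=
        (key _).symm
    _ ≤ (⊤ : Subgroup G).lowerCentralSeries (Group.nilpotencyClass G) :=
        Subgroup.lowerCentralSeries_antitone _ (Nat.le_add_left _ _)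
    _ = ⊥ := Subgroup.lowerCentralSeries_nilpotencyClass

/-- If the abelianization of a nilpotent group is cyclic, the group is abelian. -/
theorem commutator_eq_bot_of_cyclic_abelianization [Group.IsNilpotent G]
    (h : IsCyclic (G ⧸ commutator G)) : commutator G = ⊥ := by
  set L2 := (⊤ : Subgroup G).lowerCentralSeries 2 with hL2def
  have hL2le : L2 ≤ commutator G := by
    have := Subgroup.lowerCentralSeries_antitone (⊤ : Subgroup G) (show 1 ≤ 2 by norm_num)
    rwa [Subgroup.top_lowerCentralSeries_one] at this
  let f := QuotientGroup.mk' L2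
  let φ : (G ⧸ L2) →* (G ⧸ commutator G) :=
    QuotientGroup.map L2 (commutator G) (MonoidHom.id G) (by simpa using hL2le)
  have hker : φ.ker ≤ center (G ⧸ L2) := by
    intro q hq
    obtain ⟨g, rfl⟩ := QuotientGroup.mk'_surjective L2 q
    have hg : g ∈ commutator G := by
      have : QuotientGroup.mk' (commutator G) g = 1 := hq
      rwa [← MonoidHom.mem_ker, QuotientGroup.ker_mk'] at this
    rw [Subgroup.mem_center_iff]
    intro b
    obtain ⟨h', rfl⟩ := QuotientGroup.mk'_surjective L2 b
    have hmem : ⁅g, h'⁆ ∈ L2 := by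
      have : ⁅g, h'⁆ ∈ ⁅(⊤ : Subgroup G).lowerCentralSeries 1, (⊤ : Subgroup G)⁆ :=
        Subgroup.commutator_mem_commutator (by rwa [Subgroup.top_lowerCentralSeries_one]) (mem_top h')
      rwa [← lcs_succ'] at this
    have h1 : f ⁅g, h'⁆ = 1 := by
      rwa [← MonoidHom.mem_ker, QuotientGroup.ker_mk']
    rw [map_commutatorElement] at h1
    exact (commutatorElement_eq_one_iff_mul_comm.mp h1).symm
  have hcomm : ∀ a b : G ⧸ L2, a * b = b * a :=
    commutative_of_cyclic_center_quotient φ hker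
  have h12 : (⊤ : Subgroup G).lowerCentralSeries 1 = (⊤ : Subgroup G).lowerCentralSeries 2 := by
    refine le_antisymm ?_ (Subgroup.lowerCentralSeries_antitone _ (by norm_num))
    rw [Subgroup.top_lowerCentralSeries_one, _root_.commutator_def, Subgroup.commutator_le]
    intro g _ h' _
    have : f ⁅g, h'⁆ = 1 := by
      rw [map_commutatorElement, commutatorElement_eq_one_iff_mul_comm]
      exact hcomm _ _
    rwa [← MonoidHom.mem_ker, QuotientGroup.ker_mk'] at this
  have := lcs_eq_bot_of_stable (n := 1) (by rw [h12])
  rwa [Subgroup.top_lowerCentralSeries_one] at this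

end Aux

/-- A finite `p`-group with derived length `d > 1` has composition length at least
`2^(d−1) + 1`; that is, if `|G| = p^c` then `c ≥ 2^(d−1) + 1`. -/
theorem pGroup_comp_length_ge (p : ℕ) (hp : p.Prime) (G : Type*) [Group G] [Finite G]
    (hG : IsPGroup p G) (d : ℕ) (hd : DerivedLengthEq G d) (hd1 : 1 < d) :
    2 ^ (d - 1) + 1 ≤ Omega (Nat.card G) ∧
      ∀ c : ℕ, Nat.card G = p ^ c → 2 ^ (d - 1) + 1 ≤ c := by
  haveI : Fact p.Prime := ⟨hp⟩
  haveI : Group.IsNilpotent G := hG.isNilpotent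
  set m : ℕ := 2 ^ (d - 1) - 1 with hm
  have h2 : (1 : ℕ) ≤ 2 ^ (d - 1) := Nat.one_le_two_pow
  -- L m ≠ ⊥
  have hLm : (⊤ : Subgroup G).lowerCentralSeries m ≠ ⊥ := by
    intro hbot
    exact hd.2 (d - 1) (by omega) (le_bot_iff.mp (hbot ▸ derivedSeries_le_lcs (d - 1)))
  have hLne : ∀ j ≤ m, (⊤ : Subgroup G).lowerCentralSeries j ≠ ⊥ := fun j hj hbot =>
    hLm (le_bot_iff.mp (hbot ▸ Subgroup.lowerCentralSeries_antitone _ hj))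
  -- strictness gives divisibility by powers of p
  have hstep : ∀ j ≤ m, p * Nat.card ((⊤ : Subgroup G).lowerCentralSeries (j + 1)) ∣
      Nat.card ((⊤ : Subgroup G).lowerCentralSeries j) := by
    intro j hj
    have hle : (⊤ : Subgroup G).lowerCentralSeries (j + 1) ≤ (⊤ : Subgroup G).lowerCentralSeries j :=
      Subgroup.lowerCentralSeries_antitone _ (Nat.le_succ j)
    have hne : (⊤ : Subgroup G).lowerCentralSeries (j + 1) ≠ (⊤ : Subgroup G).lowerCentralSeries j := by
      intro heq
      exact hLne j hj (lcs_eq_bot_of_stable heq.symm)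
    obtain ⟨a, ha⟩ := (hG.to_subgroup ((⊤ : Subgroup G).lowerCentralSeries j)).exists_card_eq
    obtain ⟨b, hb⟩ := (hG.to_subgroup ((⊤ : Subgroup G).lowerCentralSeries (j + 1))).exists_card_eq
    have hdvd : Nat.card ((⊤ : Subgroup G).lowerCentralSeries (j + 1)) ∣
        Nat.card ((⊤ : Subgroup G).lowerCentralSeries j) := by
      have := Subgroup.card_dvd_of_le hle
      exact this
    have hblt : b < a := by
      rcases lt_or_ge b a with h | h
      · exact h
      · exfalso
        apply hne
        apply Subgroup.eq_of_le_of_card_ge hle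
        rw [ha, hb]
        exact Nat.pow_le_pow_right hp.pos h
    rw [ha, hb]
    calc p * p ^ b = p ^ (b + 1) := by ring
      _ ∣ p ^ a := pow_dvd_pow p (by omega)
  -- p^k ∣ card (L (m + 1 - k))
  have hpow : ∀ k ≤ m, p ^ k ∣ Nat.card ((⊤ : Subgroup G).lowerCentralSeries (m + 1 - k)) := by
    intro k
    induction k with
    | zero => intro _; simp
    | succ k ih =>
      intro hk
      have h1 : m + 1 - k = (m - k) + 1 := by omega
      have h2' : m + 1 - (k + 1) = m - k := by omega
      have := ih (by omega)
      rw [h1] at this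
      have := mul_dvd_mul_left p this
      have hd2 := dvd_trans this (hstep (m - k) (by omega))
      rw [h2']
      calc p ^ (k + 1) = p * p ^ k := by ring
        _ ∣ _ := hd2
  have hL1 : p ^ m ∣ Nat.card ((⊤ : Subgroup G).lowerCentralSeries 1) := by
    have := hpow m le_rfl
    simpa using this
  -- the abelianization has order divisible by p^2
  have hab : p ^ 2 ∣ Nat.card (G ⧸ commutator G) := by
    obtain ⟨a, ha⟩ := (hG.to_quotient (commutator G)).exists_card_eq
    rw [ha]
    apply pow_dvd_pow p
    by_contra hlt
    have ha2 : a ≤ 1 := by omega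
    have hcyc : IsCyclic (G ⧸ commutator G) := by
      interval_cases a
      · have : Nat.card (G ⧸ commutator G) = 1 := by simpa using ha
        have : Subsingleton (G ⧸ commutator G) := Nat.card_eq_one_iff_unique.mp this |>.1
        infer_instance
      · exact isCyclic_of_prime_card (p := p) (by simpa using ha)
    have hbot := commutator_eq_bot_of_cyclic_abelianization hcyc
    apply hLne 1 (by have := Nat.one_lt_two_pow_iff.mpr (show d - 1 ≠ 0 by omega); omega)
    rw [Subgroup.top_lowerCentralSeries_one]
    exact hbot
  -- combine
  have hcard : Nat.card G = Nat.card (G ⧸ commutator G) * Nat.card (commutator G) :=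
    Subgroup.card_eq_card_quotient_mul_card_subgroup (commutator G)
  have hfull : p ^ (m + 2) ∣ Nat.card G := by
    rw [hcard]
    have : p ^ m ∣ Nat.card (commutator G) := by
      rwa [Subgroup.top_lowerCentralSeries_one] at hL1
    calc p ^ (m + 2) = p ^ 2 * p ^ m := by ring
      _ ∣ _ := mul_dvd_mul hab this
  obtain ⟨c, hc⟩ := hG.exists_card_eq
  have hcge : ∀ c' : ℕ, Nat.card G = p ^ c' → 2 ^ (d - 1) + 1 ≤ c' := by
    intro c' hc'
    have : p ^ (m + 2) ∣ p ^ c' := hc' ▸ hfull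
    have hle := (Nat.pow_dvd_pow_iff_le_right hp.one_lt).mp this
    omega
  constructor
  · have : Omega (Nat.card G) = c := by
      rw [hc, Omega, hp.primeFactorsList_pow, List.length_replicate]
    rw [this]
    exact hcge c hc
  · exact hcge
end

section
/- Let d ≥ 1 and let P be a Sylow 2-subgroup of the symmetric group on 2^d letters. Then P has derived length exactly d and order 2^(2^d − 1) (hence composition length 2^d − 1). -/
open Equiv Subgroup SemidirectProduct
open scoped commutatorElement

/-- Swap action of `Perm Bool` on `Bool → G`. -/
def wrAct (G : Type*) [Group G] : Equiv.Perm Bool →* MulAut (Bool → G) where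
  toFun σ :=
    { toFun := fun f b => f (σ⁻¹ b)
      invFun := fun f b => f (σ b)
      left_inv := fun f => by funext b; simp
      right_inv := fun f => by funext b; simp
      map_mul' := fun f g => rfl }
  map_one' := by ext f b; simp
  map_mul' := fun σ τ => by ext f b; simp [Equiv.Perm.mul_apply]

/-- The wreath product `G ≀ C₂`. -/
abbrev Wr (G : Type*) [Group G] := (Bool → G) ⋊[wrAct G] Equiv.Perm Bool

variable {G : Type*} [Group G]

lemma ds_succ_le (n : ℕ) : derivedSeries G (n + 1) ≤ derivedSeries G n := by
  induction n with
  | zero => exact le_top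
  | succ n ih =>
    rw [derivedSeries_succ G (n+1)]
    calc ⁅derivedSeries G (n+1), derivedSeries G (n+1)⁆
        ≤ ⁅derivedSeries G n, derivedSeries G n⁆ := Subgroup.commutator_mono ih ih
      _ = derivedSeries G (n+1) := (derivedSeries_succ G n).symm

lemma ds_antitone {k m : ℕ} (h : k ≤ m) : derivedSeries G m ≤ derivedSeries G k := by
  induction m with
  | zero => simpa [Nat.le_zero.mp h] using le_rfl
  | succ m ih =>
    rcases Nat.lt_or_ge k (m+1) with hk | hk
    · exact (ds_succ_le m).trans (ih (Nat.lt_succ_iff.mp hk))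
    · have : k = m + 1 := le_antisymm h hk
      simp [this]

lemma comm_comap {H : Type*} [Group H] (f : G →* H) (A B : Subgroup H) :
    ⁅A.comap f, B.comap f⁆ ≤ ⁅A, B⁆.comap f := by
  rw [Subgroup.commutator_le]
  intro a ha b hb
  simp only [Subgroup.mem_comap, map_commutatorElement]
  exact Subgroup.commutator_mem_commutator ha hb

/-- Perm Bool is commutative. -/
lemma permBool_comm (x y : Equiv.Perm Bool) : x * y = y * x := by
  revert x y; decide

lemma pi_ds_bot {d : ℕ} (h : derivedSeries G d = ⊥) :
    derivedSeries (Bool → G) d = ⊥ := by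
  rw [eq_bot_iff]
  intro x hx
  rw [Subgroup.mem_bot]
  funext b
  have : (Pi.evalMonoidHom (fun _ : Bool => G) b) x ∈ derivedSeries G d :=
    map_derivedSeries_le_derivedSeries (Pi.evalMonoidHom (fun _ : Bool => G) b) d
      (Subgroup.mem_map_of_mem _ hx)
  rw [h, Subgroup.mem_bot] at this
  exact this

lemma wr_upper (n : ℕ) :
    derivedSeries (Wr G) (n + 1) ≤ (derivedSeries (Bool → G) n).map inl := by
  induction n with
  | zero =>
    rw [derivedSeries_succ, derivedSeries_zero, derivedSeries_zero,
      ← MonoidHom.range_eq_map, range_inl_eq_ker_rightHom, Subgroup.commutator_le]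
    intro a _ b _
    rw [MonoidHom.mem_ker, map_commutatorElement]
    exact commutatorElement_eq_one_iff_commute.mpr (permBool_comm _ _)
  | succ n ih =>
    rw [derivedSeries_succ]
    calc ⁅derivedSeries (Wr G) (n+1), derivedSeries (Wr G) (n+1)⁆
        ≤ ⁅(derivedSeries (Bool → G) n).map inl, (derivedSeries (Bool → G) n).map inl⁆ :=
          Subgroup.commutator_mono ih ih
      _ = (⁅derivedSeries (Bool → G) n, derivedSeries (Bool → G) n⁆).map inl :=
          (Subgroup.map_commutator _ _ _).symm
      _ = (derivedSeries (Bool → G) (n+1)).map inl := by rw [derivedSeries_succ]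

lemma wr_lower (k : ℕ) :
    derivedSeries G k ≤
      (((derivedSeries (Wr G) (k + 1)).comap (inl : (Bool → G) →* Wr G)).map
        (Pi.evalMonoidHom (fun _ : Bool => G) true)) := by
  induction k with
  | zero =>
    rw [derivedSeries_zero]
    intro g _
    set σ : Equiv.Perm Bool := Equiv.swap true false with hσ
    set n : Bool → G := fun b => if b then g else 1 with hn
    have key : (⁅(inl n : Wr G), (inr σ : Wr G)⁆) = inl (n * wrAct G σ n⁻¹) := by
      rw [commutatorElement_def, map_mul, inl_aut, ← map_inv, ← map_inv]
      group
    refine ⟨n * wrAct G σ n⁻¹, ?_, ?_⟩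
    · show n * wrAct G σ n⁻¹ ∈ (derivedSeries (Wr G) (0 + 1)).comap inl
      rw [Subgroup.mem_comap, ← key, derivedSeries_succ, derivedSeries_zero]
      exact Subgroup.commutator_mem_commutator (Subgroup.mem_top _) (Subgroup.mem_top _)
    · show (n * wrAct G σ n⁻¹) true = g
      have h1 : σ⁻¹ true = false := by simp [hσ]
      show n true * (n⁻¹ (σ⁻¹ true)) = g
      rw [h1, hn]
      simp
  | succ k ih =>
    rw [derivedSeries_succ]
    calc ⁅derivedSeries G k, derivedSeries G k⁆
        ≤ ⁅((derivedSeries (Wr G) (k + 1)).comap inl).map (Pi.evalMonoidHom (fun _ : Bool => G) true),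
            ((derivedSeries (Wr G) (k + 1)).comap inl).map (Pi.evalMonoidHom (fun _ : Bool => G) true)⁆ :=
          Subgroup.commutator_mono ih ih
      _ = (⁅(derivedSeries (Wr G) (k + 1)).comap inl, (derivedSeries (Wr G) (k + 1)).comap inl⁆).map
            (Pi.evalMonoidHom (fun _ : Bool => G) true) := (Subgroup.map_commutator _ _ _).symm
      _ ≤ ((⁅derivedSeries (Wr G) (k + 1), derivedSeries (Wr G) (k + 1)⁆).comap inl).map
            (Pi.evalMonoidHom (fun _ : Bool => G) true) :=
          Subgroup.map_mono (comm_comap _ _ _)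
      _ = ((derivedSeries (Wr G) (k + 2)).comap inl).map (Pi.evalMonoidHom (fun _ : Bool => G) true) := by
          rw [← derivedSeries_succ]

theorem wr_DLE {d : ℕ} (h : DerivedLengthEq G d) : DerivedLengthEq (Wr G) (d + 1) := by
  constructor
  · have h1 : derivedSeries (Wr G) (d + 1) ≤ (derivedSeries (Bool → G) d).map inl := wr_upper d
    rw [pi_ds_bot h.1, Subgroup.map_bot] at h1
    exact le_bot_iff.mp h1
  · have hd : derivedSeries (Wr G) d ≠ ⊥ := by
      cases d with
      | zero =>
        rw [derivedSeries_zero]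
        intro htop
        have : (inr (Equiv.swap true false) : Wr G) = 1 := by
          rw [← Subgroup.mem_bot, ← htop]; exact Subgroup.mem_top _
        have h2 : (Equiv.swap true false : Equiv.Perm Bool) = 1 := by
          have := congrArg rightHom this
          simpa using this
        have : (Equiv.swap true false : Equiv.Perm Bool) true = true := by rw [h2]; rfl
        simp at this
      | succ k =>
        intro hbot
        apply h.2 k (Nat.lt_succ_self k)
        have h1 := wr_lower (G := G) k
        have hker : Subgroup.comap (inl : (Bool → G) →* Wr G) ⊥ = ⊥ := by
          rw [MonoidHom.comap_bot]
          exact (MonoidHom.ker_eq_bot_iff _).mpr inl_injective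
        rw [hbot, hker, Subgroup.map_bot] at h1
        exact le_bot_iff.mp h1
    intro k hk hbot
    exact hd (le_bot_iff.mp (hbot ▸ ds_antitone (Nat.lt_succ_iff.mp hk)))

lemma wr_card : Nat.card (Wr G) = 2 * Nat.card G ^ 2 := by
  have e1 : Wr G ≃ (Bool → G) × Equiv.Perm Bool :=
    ⟨fun x => (x.left, x.right), fun y => ⟨y.1, y.2⟩, fun x => rfl, fun y => rfl⟩
  rw [Nat.card_congr e1, Nat.card_prod, Nat.card_congr (Equiv.boolArrowEquivProd G),
    Nat.card_prod, Nat.card_eq_fintype_card (α := Equiv.Perm Bool)]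
  rw [Fintype.card_perm]
  simp [sq]
  ring

theorem wr_embed {α : Type*} [Nonempty α] (f : G →* Equiv.Perm α)
    (hf : Function.Injective f) :
    ∃ F : Wr G →* Equiv.Perm (Bool × α), Function.Injective F := by
  classical
  let f₁ : (Bool → G) →* Equiv.Perm (Bool × α) :=
    { toFun := fun n => Equiv.prodShear (Equiv.refl Bool) (fun b => f (n b))
      map_one' := by ext ⟨b, a⟩ <;> simp [Equiv.prodShear]
      map_mul' := fun n m => by
        ext ⟨b, a⟩ <;> simp [Equiv.prodShear, Equiv.Perm.mul_apply] }
  let f₂ : Equiv.Perm Bool →* Equiv.Perm (Bool × α) :=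
    { toFun := fun σ => Equiv.prodCongr σ (Equiv.refl α)
      map_one' := by ext ⟨b, a⟩ <;> simp
      map_mul' := fun σ τ => by ext ⟨b, a⟩ <;> simp [Equiv.Perm.mul_apply] }
  have hcompat : ∀ σ : Equiv.Perm Bool,
      f₁.comp ((wrAct G σ).toMonoidHom) = (MulAut.conj (f₂ σ)).toMonoidHom.comp f₁ := by
    intro σ
    ext n ⟨b, a⟩
    · simp [f₁, f₂, Equiv.prodShear, wrAct, MulAut.conj_apply, Equiv.Perm.mul_apply,
        Equiv.Perm.inv_def, Equiv.prodCongr_symm]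
    · simp [f₁, f₂, Equiv.prodShear, wrAct, MulAut.conj_apply, Equiv.Perm.mul_apply,
        Equiv.Perm.inv_def, Equiv.prodCongr_symm]
  refine ⟨lift f₁ f₂ hcompat, ?_⟩
  rw [injective_iff_map_eq_one]
  rintro ⟨n, σ⟩ hx
  have hx' : ∀ b a, ((σ b, f (n (σ b)) a) : Bool × α) = (b, a) := by
    intro b a
    have : (lift f₁ f₂ hcompat ⟨n, σ⟩) (b, a) = (b, a) := by rw [hx]; rfl
    have hval : (lift f₁ f₂ hcompat ⟨n, σ⟩) (b, a) = (σ b, f (n (σ b)) a) := by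
      show (f₁ n * f₂ σ) (b, a) = _
      simp [f₁, f₂, Equiv.prodShear, Equiv.Perm.mul_apply]
    rw [hval] at this
    exact this
  obtain ⟨a₀⟩ := ‹Nonempty α›
  have hσ : σ = 1 := by
    ext b
    have := congrArg Prod.fst (hx' b a₀)
    simpa using this
  have hn : n = 1 := by
    funext b
    apply hf
    ext a
    have := congrArg Prod.snd (hx' b a)
    rw [hσ] at this
    simpa using this
  rw [hσ, hn]
  rfl

theorem exists_good : ∀ d : ℕ, ∃ (H : Type) (_ : Group H)
    (F : H →* Equiv.Perm (Fin (2 ^ d))), Function.Injective F ∧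
      Nat.card H = 2 ^ (2 ^ d - 1) ∧ DerivedLengthEq H d := by
  intro d
  induction d with
  | zero =>
    refine ⟨PUnit, inferInstance, 1, fun a b _ => Subsingleton.elim a b, by simp, ?_, ?_⟩
    · rw [eq_bot_iff]
      intro x _
      rw [Subgroup.mem_bot]
    · intro k hk
      exact absurd hk (Nat.not_lt_zero k)
  | succ d ih =>
    obtain ⟨H, instH, F, hinj, hcard, hdle⟩ := ih
    obtain ⟨F', hF'⟩ := wr_embed (G := H) F hinj
    have hc : Fintype.card (Bool × Fin (2 ^ d)) = Fintype.card (Fin (2 ^ (d + 1))) := by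
      simp [pow_succ, Nat.mul_comm]
    let e : (Bool × Fin (2 ^ d)) ≃ Fin (2 ^ (d + 1)) := Fintype.equivOfCardEq hc
    refine ⟨Wr H, inferInstance, (Equiv.Perm.viaEmbeddingHom e.toEmbedding).comp F',
      (Equiv.Perm.viaEmbeddingHom_injective e.toEmbedding).comp hF', ?_, wr_DLE hdle⟩
    rw [wr_card, hcard, ← pow_mul, ← pow_succ']
    congr 1
    have h1 : 1 ≤ 2 ^ d := Nat.one_le_two_pow
    have h2 : 2 ^ (d + 1) = 2 ^ d * 2 := pow_succ 2 d
    omega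

lemma sum_div_pow : ∀ d : ℕ, ∑ i ∈ Finset.Ico 1 (d + 1), 2 ^ d / 2 ^ i = 2 ^ d - 1 := by
  intro d
  induction d with
  | zero => simp
  | succ d ih =>
    rw [Finset.sum_Ico_succ_top (by omega)]
    have hstep : ∑ i ∈ Finset.Ico 1 (d + 1), 2 ^ (d + 1) / 2 ^ i
        = 2 * ∑ i ∈ Finset.Ico 1 (d + 1), 2 ^ d / 2 ^ i := by
      rw [Finset.mul_sum]
      apply Finset.sum_congr rfl
      intro i hi
      rw [Finset.mem_Ico] at hi
      have hid : i ≤ d := by omega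
      rw [Nat.pow_div hid (by norm_num), Nat.pow_div (by omega) (by norm_num),
        ← pow_succ']
      congr 1
      omega
    rw [hstep, ih, Nat.div_self (by positivity)]
    have h1 : 1 ≤ 2 ^ d := Nat.one_le_two_pow
    have h2 : 2 ^ (d + 1) = 2 ^ d * 2 := pow_succ 2 d
    omega

lemma DLE_congr {A B : Type*} [Group A] [Group B] (e : A ≃* B) {d : ℕ}
    (h : DerivedLengthEq A d) : DerivedLengthEq B d := by
  have hmap : ∀ n, (derivedSeries A n).map e.toMonoidHom = derivedSeries B n :=
    fun n => map_derivedSeries_eq (f := e.toMonoidHom) e.surjective n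
  constructor
  · rw [← hmap d, h.1, Subgroup.map_bot]
  · intro k hk hbot
    apply h.2 k hk
    have := hmap k
    rw [hbot, Subgroup.map_eq_bot_iff, (MonoidHom.ker_eq_bot_iff _).mpr e.injective] at this
    exact le_bot_iff.mp this

lemma perm_card_factorization (d : ℕ) :
    (Nat.card (Equiv.Perm (Fin (2 ^ d)))).factorization 2 = 2 ^ d - 1 := by
  have h1 : Nat.card (Equiv.Perm (Fin (2 ^ d))) = Nat.factorial (2 ^ d) := by
    rw [Nat.card_eq_fintype_card, Fintype.card_perm, Fintype.card_fin]
  rw [h1, Nat.factorization_def _ Nat.prime_two,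
    padicValNat_factorial (p := 2) (b := d + 1) (by rw [Nat.log_pow (by norm_num)]; omega),
    sum_div_pow d]

/-- A Sylow `2`-subgroup of the symmetric group on `2^d` letters (`d ≥ 1`) has derived
length exactly `d` and order `2^(2^d − 1)` (hence composition length `2^d − 1`). -/
theorem sylow_two_perm_derived_length_and_card (d : ℕ) (hd : 1 ≤ d)
    (P : Sylow 2 (Equiv.Perm (Fin (2 ^ d)))) :
    DerivedLengthEq (P : Subgroup (Equiv.Perm (Fin (2 ^ d)))) d ∧
      Nat.card (P : Subgroup (Equiv.Perm (Fin (2 ^ d)))) = 2 ^ (2 ^ d - 1) := by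
  constructor
  · obtain ⟨H, instH, F, hinj, hcard, hdle⟩ := exists_good d
    have hcardR : Nat.card F.range
        = 2 ^ ((Nat.card (Equiv.Perm (Fin (2 ^ d)))).factorization 2) := by
      rw [perm_card_factorization, ← hcard]
      exact (Nat.card_congr (MonoidHom.ofInjective hinj).toEquiv).symm
    let P2 : Sylow 2 (Equiv.Perm (Fin (2 ^ d))) := Sylow.ofCard F.range hcardR
    have e2 : (P2 : Subgroup (Equiv.Perm (Fin (2 ^ d)))) ≃* H :=
      (MonoidHom.ofInjective hinj).symm
    exact DLE_congr (((Sylow.equiv P2 P).symm.trans e2).symm) hdle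
  · rw [Sylow.card_eq_multiplicity, perm_card_factorization]
end

section
/- Let G₉ be the semidirect product V ⋊ GL(2, F₃), where V = F₃² is the natural 2-dimensional module for GL(2, F₃) over the field with 3 elements. Then G₉ has order 432 and derived length exactly 5 (hence composition length Ω(432) = 7). -/
/-- The natural action of `GL(2, F₃)` on its natural module `V = F₃²` (written
multiplicatively, so that it can be used to form a `SemidirectProduct`): `g` acts on a
column vector `v` by matrix-vector multiplication. -/
def glAction : GL (Fin 2) (ZMod 3) →* MulAut (Multiplicative (Fin 2 → ZMod 3)) where
  toFun g :=
    { toFun := fun v => Multiplicative.ofAdd (g.val.mulVec v.toAdd)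
      invFun := fun v => Multiplicative.ofAdd ((g⁻¹).val.mulVec v.toAdd)
      left_inv := fun v => by
        simp only [toAdd_ofAdd]
        rw [Matrix.mulVec_mulVec, ← Units.val_mul, inv_mul_cancel,
          Units.val_one, Matrix.one_mulVec]
        rfl
      right_inv := fun v => by
        simp only [toAdd_ofAdd]
        rw [Matrix.mulVec_mulVec, ← Units.val_mul, mul_inv_cancel,
          Units.val_one, Matrix.one_mulVec]
        rfl
      map_mul' := fun v w => by
        simp only [toAdd_mul, Matrix.mulVec_add, ofAdd_add] }
  map_one' := by
    ext v
    simp [Matrix.one_mulVec]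
  map_mul' g h := by
    ext v i
    fin_cases i <;> simp [Matrix.mul_apply, Fin.sum_univ_two] <;> ring

/-- `G₉ = F₃² ⋊ GL(2, F₃)`, the semidirect product of the natural module with
`GL(2, F₃)`. -/
abbrev G₉ : Type := (Multiplicative (Fin 2 → ZMod 3)) ⋊[glAction] (GL (Fin 2) (ZMod 3))

set_option maxHeartbeats 4000000
set_option maxRecDepth 100000

namespace GNineAux

open scoped commutatorElement

abbrev M2 := Matrix (Fin 2) (Fin 2) (ZMod 3)
abbrev GL3 := GL (Fin 2) (ZMod 3)

def Q2 (m : M2) : Prop := m = 1 ∨ m = -1 ∨ (m.det = 1 ∧ m.trace = 0)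
def Q3 (m : M2) : Prop := m = 1 ∨ m = -1

instance : DecidablePred Q2 := fun m => by unfold Q2; infer_instance
instance : DecidablePred Q3 := fun m => by unfold Q3; infer_instance

lemma inv_eq_adj : ∀ a b : M2, a.det = 1 → a * b = 1 → b = a.adjugate := by decide
lemma det_inv1 : ∀ a b : M2, a.det = 1 → a * b = 1 → b.det = 1 := by decide
lemma stepb : ∀ a b : M2, a.det = 1 → b.det = 1 → Q2 (a*b*a.adjugate*b.adjugate) := by decide
lemma q2det : ∀ a : M2, Q2 a → a.det = 1 := by decide
lemma stepc : ∀ a b : M2, Q2 a → Q2 b → Q3 (a*b*a.adjugate*b.adjugate) := by decide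
lemma q2mul : ∀ a b : M2, Q2 a → Q2 b → Q2 (a*b) := by decide
lemma q2inv : ∀ a b : M2, Q2 a → a * b = 1 → Q2 b := by decide
lemma q3mul : ∀ a b : M2, Q3 a → Q3 b → Q3 (a*b) := by decide
lemma q3inv : ∀ a b : M2, Q3 a → a * b = 1 → Q3 b := by decide
lemma q3comm : ∀ a b : M2, Q3 a → Q3 b → a * b = b * a := by decide

lemma val_mul_inv (g : GL3) : g.val * (g⁻¹).val = 1 := by
  rw [← Units.val_mul, mul_inv_cancel, Units.val_one]

lemma val_comm (g h : GL3) :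
    (⁅g, h⁆ : GL3).val = g.val * h.val * (g⁻¹).val * (h⁻¹).val := by
  simp [commutatorElement_def, Units.val_mul]

def K1 : Subgroup GL3 where
  carrier := {g | g.val.det = 1}
  one_mem' := by simp
  mul_mem' := by
    intro a b ha hb
    simp only [Set.mem_setOf_eq, Units.val_mul, Matrix.det_mul] at *
    rw [ha, hb, mul_one]
  inv_mem' := by
    intro a ha
    exact det_inv1 _ _ ha (val_mul_inv a)

def K2 : Subgroup GL3 where
  carrier := {g | Q2 g.val}
  one_mem' := Or.inl rfl
  mul_mem' := fun ha hb => q2mul _ _ ha hb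
  inv_mem' := fun ha => q2inv _ _ ha (val_mul_inv _)

def K3 : Subgroup GL3 where
  carrier := {g | Q3 g.val}
  one_mem' := Or.inl rfl
  mul_mem' := fun ha hb => q3mul _ _ ha hb
  inv_mem' := fun ha => q3inv _ _ ha (val_mul_inv _)

lemma D1_le_K1 : derivedSeries GL3 1 ≤ K1 := by
  rw [derivedSeries_succ, Subgroup.commutator_le]
  intro g _ h _
  show (⁅g, h⁆ : GL3).val.det = 1
  have hg : g.val.det * (g⁻¹).val.det = 1 := by
    rw [← Matrix.det_mul, val_mul_inv, Matrix.det_one]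
  have hh : h.val.det * (h⁻¹).val.det = 1 := by
    rw [← Matrix.det_mul, val_mul_inv, Matrix.det_one]
  rw [val_comm]
  simp only [Matrix.det_mul]
  calc g.val.det * h.val.det * (g⁻¹).val.det * (h⁻¹).val.det
      = (g.val.det * (g⁻¹).val.det) * (h.val.det * (h⁻¹).val.det) := by ring
    _ = 1 := by rw [hg, hh, mul_one]

lemma D2_le_K2 : derivedSeries GL3 2 ≤ K2 := by
  rw [derivedSeries_succ]
  refine le_trans (Subgroup.commutator_mono D1_le_K1 D1_le_K1) ?_
  rw [Subgroup.commutator_le]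
  intro g hg h hh
  show Q2 (⁅g, h⁆ : GL3).val
  rw [val_comm, inv_eq_adj _ _ hg (val_mul_inv g), inv_eq_adj _ _ hh (val_mul_inv h)]
  exact stepb _ _ hg hh

lemma D3_le_K3 : derivedSeries GL3 3 ≤ K3 := by
  rw [derivedSeries_succ]
  refine le_trans (Subgroup.commutator_mono D2_le_K2 D2_le_K2) ?_
  rw [Subgroup.commutator_le]
  intro g hg h hh
  show Q3 (⁅g, h⁆ : GL3).val
  rw [val_comm, inv_eq_adj _ _ (q2det _ hg) (val_mul_inv g),
    inv_eq_adj _ _ (q2det _ hh) (val_mul_inv h)]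
  exact stepc _ _ hg hh

lemma GL_derived4 : derivedSeries GL3 4 = ⊥ := by
  rw [derivedSeries_succ, eq_bot_iff]
  refine le_trans (Subgroup.commutator_mono D3_le_K3 D3_le_K3) ?_
  rw [Subgroup.commutator_le]
  intro g hg h hh
  rw [Subgroup.mem_bot, commutatorElement_eq_one_iff_commute]
  exact Units.ext (q3comm _ _ hg hh)

open SemidirectProduct

lemma G_derived5 : derivedSeries G₉ 5 = ⊥ := by
  have h4 : derivedSeries G₉ 4 ≤ (rightHom : G₉ →* GL3).ker := by
    rw [← Subgroup.map_eq_bot_iff, eq_bot_iff, ← GL_derived4]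
    exact map_derivedSeries_le_derivedSeries rightHom 4
  rw [show (5 : ℕ) = 4 + 1 from rfl, derivedSeries_succ, eq_bot_iff]
  refine le_trans (Subgroup.commutator_mono h4 h4) ?_
  rw [Subgroup.commutator_le]
  intro g hg h hh
  rw [MonoidHom.mem_ker, rightHom_eq_right] at hg hh
  rw [Subgroup.mem_bot, commutatorElement_eq_one_iff_commute]
  have hg' : g = inl g.left := by
    conv_lhs => rw [← inl_left_mul_inr_right g]
    rw [hg, map_one, mul_one]
  have hh' : h = inl h.left := by
    conv_lhs => rw [← inl_left_mul_inr_right h]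
    rw [hh, map_one, mul_one]
  rw [hg', hh']
  unfold Commute SemiconjBy
  rw [← map_mul, ← map_mul, mul_comm]

-- explicit units
def U (a b : M2) (h1 : a * b = 1) (h2 : b * a = 1) : GL3 := ⟨a, b, h1, h2⟩
def x1 : GL3 := U !![0,1;1,0] !![0,1;1,0] (by decide) (by decide)
def x2 : GL3 := U !![1,2;1,1] !![2,2;1,2] (by decide) (by decide)
def x3 : GL3 := U !![0,1;1,0] !![0,1;1,0] (by decide) (by decide)
def x4 : GL3 := U !![0,1;1,1] !![2,1;1,0] (by decide) (by decide)
def x7 : GL3 := U !![0,1;1,0] !![0,1;1,0] (by decide) (by decide)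
def x8 : GL3 := U !![0,1;2,2] !![2,2;1,0] (by decide) (by decide)
def negU : GL3 := U !![2,0;0,2] !![2,0;0,2] (by decide) (by decide)

def sC : GL3 := ⁅x1, x2⁆
def tC : GL3 := ⁅x3, x4⁆
def t2C : GL3 := ⁅x7, x8⁆
def iC : GL3 := ⁅sC, tC⁆
def jC : GL3 := ⁅sC, t2C⁆
def negC : GL3 := ⁅iC, jC⁆

lemma hsD1 : sC ∈ derivedSeries GL3 1 := by
  rw [derivedSeries_succ, derivedSeries_zero]
  exact Subgroup.commutator_mem_commutator (Subgroup.mem_top _) (Subgroup.mem_top _)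
lemma htD1 : tC ∈ derivedSeries GL3 1 := by
  rw [derivedSeries_succ, derivedSeries_zero]
  exact Subgroup.commutator_mem_commutator (Subgroup.mem_top _) (Subgroup.mem_top _)
lemma ht2D1 : t2C ∈ derivedSeries GL3 1 := by
  rw [derivedSeries_succ, derivedSeries_zero]
  exact Subgroup.commutator_mem_commutator (Subgroup.mem_top _) (Subgroup.mem_top _)
lemma hiD2 : iC ∈ derivedSeries GL3 2 := by
  rw [derivedSeries_succ]
  exact Subgroup.commutator_mem_commutator hsD1 htD1
lemma hjD2 : jC ∈ derivedSeries GL3 2 := by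
  rw [derivedSeries_succ]
  exact Subgroup.commutator_mem_commutator hsD1 ht2D1
lemma hnegD3 : negC ∈ derivedSeries GL3 3 := by
  rw [derivedSeries_succ]
  exact Subgroup.commutator_mem_commutator hiD2 hjD2

lemma inrD {k : ℕ} {g : GL3} (hg : g ∈ derivedSeries GL3 k) :
    (inr g : G₉) ∈ derivedSeries G₉ k :=
  map_derivedSeries_le_derivedSeries (inr : GL3 →* G₉) k (Subgroup.mem_map_of_mem _ hg)

lemma comm_inl_inr (w : Fin 2 → ZMod 3) (g : GL3) :
    (⁅(inl (Multiplicative.ofAdd w) : G₉), inr g⁆ : G₉)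
      = inl (Multiplicative.ofAdd (w - g.val.mulVec w)) := by
  have h1 : (inl (Multiplicative.ofAdd w) : G₉)⁻¹ = inl (Multiplicative.ofAdd (-w)) := by
    rw [← map_inv]; rfl
  have h2 : (inr g : G₉)⁻¹ = inr g⁻¹ := (map_inv _ _).symm
  have h3 : glAction g (Multiplicative.ofAdd (-w)) = Multiplicative.ofAdd (g.val.mulVec (-w)) := rfl
  rw [commutatorElement_def, h1, h2, mul_assoc, mul_assoc, ← mul_assoc (inr g),
    ← inl_aut, h3, ← map_mul, ← ofAdd_add, Matrix.mulVec_neg, ← sub_eq_add_neg]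

lemma reach (g : GL3) (m : M2) (hm : (1 - g.val) * m = 1) (v : Fin 2 → ZMod 3) :
    ∃ w, w - g.val.mulVec w = v := by
  refine ⟨m.mulVec v, ?_⟩
  rw [Matrix.mulVec_mulVec, ← Matrix.sub_mulVec]
  have : m - g.val * m = 1 := by rw [← hm, sub_mul, one_mul]
  rw [this, Matrix.one_mulVec]

lemma step (k : ℕ) (g : GL3) (m : M2) (hm : (1 - g.val) * m = 1)
    (hg : (inr g : G₉) ∈ derivedSeries G₉ k)
    (hV : ∀ w, (inl (Multiplicative.ofAdd w) : G₉) ∈ derivedSeries G₉ k) :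
    ∀ v, (inl (Multiplicative.ofAdd v) : G₉) ∈ derivedSeries G₉ (k+1) := by
  intro v
  obtain ⟨w, hw⟩ := reach g m hm v
  rw [derivedSeries_succ]
  have := Subgroup.commutator_mem_commutator (hV w) hg
  rwa [comm_inl_inr, hw] at this

lemma hV1 : ∀ w, (inl (Multiplicative.ofAdd w) : G₉) ∈ derivedSeries G₉ 1 :=
  step 0 negU !![2,0;0,2] (by decide) (Subgroup.mem_top _) (fun _ => Subgroup.mem_top _)
lemma hV2 : ∀ w, (inl (Multiplicative.ofAdd w) : G₉) ∈ derivedSeries G₉ 2 :=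
  step 1 sC !![2,2;1,2] (by decide) (inrD hsD1) hV1
lemma hV3 : ∀ w, (inl (Multiplicative.ofAdd w) : G₉) ∈ derivedSeries G₉ 3 :=
  step 2 iC !![0,1;1,1] (by decide) (inrD hiD2) hV2
lemma hV4 : ∀ w, (inl (Multiplicative.ofAdd w) : G₉) ∈ derivedSeries G₉ 4 :=
  step 3 negC !![2,0;0,2] (by decide) (inrD hnegD3) hV3

lemma Dsucc_le (k : ℕ) : derivedSeries G₉ (k+1) ≤ derivedSeries G₉ k := by
  rw [derivedSeries_succ, Subgroup.commutator_le]
  intro g hg h hh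
  exact mul_mem (mul_mem (mul_mem hg hh) (inv_mem hg)) (inv_mem hh)

lemma card_G9 : Nat.card G₉ = 432 := by
  have e : G₉ ≃ (Multiplicative (Fin 2 → ZMod 3)) × GL3 :=
    ⟨fun g => (g.left, g.right), fun p => ⟨p.1, p.2⟩, fun g => rfl, fun p => rfl⟩
  rw [Nat.card_congr e, Nat.card_prod]
  have h1 : Nat.card (Multiplicative (Fin 2 → ZMod 3)) = 9 := by
    simp [Nat.card_eq_fintype_card]
  have h2 : Nat.card GL3 = 48 := by
    rw [Matrix.card_GL_field]; decide
  rw [h1, h2]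

end GNineAux

/-- The group `G₉ = F₃² ⋊ GL(2, F₃)` has order `432` and derived length exactly `5`
(hence composition length `Ω(432) = 7`). -/
theorem G_nine_card_and_derived_length :
    Nat.card G₉ = 432 ∧ DerivedLengthEq G₉ 5 ∧ Omega (Nat.card G₉) = 7 := by
  open GNineAux in
  refine ⟨card_G9, ⟨G_derived5, ?_⟩, ?_⟩
  · intro k hk hbot
    have hX : (SemidirectProduct.inl (Multiplicative.ofAdd ![1,0]) : G₉) ∈ derivedSeries G₉ 4 :=
      hV4 ![1,0]
    have hXne : (SemidirectProduct.inl (Multiplicative.ofAdd ![1,0]) : G₉) ≠ 1 := by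
      intro h
      have h2 := SemidirectProduct.inl_injective
        (h.trans (map_one (SemidirectProduct.inl : _ →* G₉)).symm)
      exact absurd (congrFun (congrArg Multiplicative.toAdd h2) 0) (by decide)
    have h43 : derivedSeries G₉ 4 ≤ derivedSeries G₉ 3 := Dsucc_le 3
    have h32 : derivedSeries G₉ 3 ≤ derivedSeries G₉ 2 := Dsucc_le 2
    have h21 : derivedSeries G₉ 2 ≤ derivedSeries G₉ 1 := Dsucc_le 1
    have h10 : derivedSeries G₉ 1 ≤ derivedSeries G₉ 0 := Dsucc_le 0
    interval_cases k
    · exact hXne (by rw [← Subgroup.mem_bot, ← hbot]; exact h10 (h21 (h32 (h43 hX))))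
    · exact hXne (by rw [← Subgroup.mem_bot, ← hbot]; exact h21 (h32 (h43 hX)))
    · exact hXne (by rw [← Subgroup.mem_bot, ← hbot]; exact h32 (h43 hX))
    · exact hXne (by rw [← Subgroup.mem_bot, ← hbot]; exact h43 hX)
    · exact hXne (by rw [← Subgroup.mem_bot, ← hbot]; exact hX)
  · rw [card_G9]
    simp [Omega]
end

section
/- For every integer r ≥ 1 there exists a finite solvable group G of odd order with derived length exactly 2r and Ω(|G|) = (7^r − 1)/3, where Ω(|G|) is the number of prime factors of |G| counted with multiplicity. (Such a group is the r-fold iterated wreath product of the group H₇ ≤ S₇ of order 21, a transitive subgroup of S_{7^r}.) -/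
open SemidirectProduct Subgroup
open scoped commutatorElement

namespace WC



/-! ### Generic lemmas -/

/-- commutator of inl and inr in a semidirect product -/
theorem comm_inl_inr {N G : Type*} [Group N] [Group G] (φ : G →* MulAut N) (n : N) (g : G) :
    ⁅(inl n : N ⋊[φ] G), (inr g : N ⋊[φ] G)⁆ = inl (n * φ g n⁻¹) := by
  ext <;> simp [commutatorElement_def]

theorem ds_comm (G : Type*) [CommGroup G] : derivedSeries G 1 = ⊥ := by
  rw [eq_bot_iff, derivedSeries_succ, derivedSeries_zero]
  exact Subgroup.commutator_le.2 fun a _ b _ => by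
    simp [Subgroup.mem_bot, commutatorElement_def, mul_comm a b]

theorem ds_succ_le (G : Type*) [Group G] (n : ℕ) :
    derivedSeries G (n + 1) ≤ derivedSeries G n := by
  rw [derivedSeries_succ]
  exact Subgroup.commutator_le.2 fun a ha b hb => by
    rw [commutatorElement_def]
    exact mul_mem (mul_mem (mul_mem ha hb) (inv_mem ha)) (inv_mem hb)

theorem ds_antitone (G : Type*) [Group G] : Antitone (derivedSeries G) :=
  antitone_nat_of_succ_le (ds_succ_le G)

/-- upper bound for derived series of semidirect products -/
theorem ds_sd_le {N G : Type*} [Group N] [Group G] (φ : G →* MulAut N) {j : ℕ}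
    (hj : derivedSeries G j = ⊥) (k : ℕ) :
    derivedSeries (N ⋊[φ] G) (j + k) ≤ Subgroup.map inl (derivedSeries N k) := by
  induction k with
  | zero =>
    rw [Nat.add_zero, derivedSeries_zero, ← MonoidHom.range_eq_map, range_inl_eq_ker_rightHom]
    intro x hx
    have := map_derivedSeries_le_derivedSeries (rightHom : N ⋊[φ] G →* G) j
      (Subgroup.mem_map_of_mem _ hx)
    rw [hj, Subgroup.mem_bot] at this
    exact this
  | succ k ih =>
    rw [← Nat.add_assoc, derivedSeries_succ, derivedSeries_succ, Subgroup.map_commutator]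
    exact (Subgroup.commutator_mono ih ih).trans le_rfl

theorem ds_pi_eq_bot {ι A : Type*} [Group A] {k : ℕ} (h : derivedSeries A k = ⊥) :
    derivedSeries (ι → A) k = ⊥ := by
  rw [eq_bot_iff]
  intro f hf
  rw [Subgroup.mem_bot]
  funext i
  have := map_derivedSeries_le_derivedSeries (Pi.evalMonoidHom (fun _ : ι => A) i) k
    (Subgroup.mem_map_of_mem _ hf)
  rw [h, Subgroup.mem_bot] at this
  exact this




def u : (ZMod 7)ˣ := ⟨2, 4, by decide, by decide⟩

def ψ : Multiplicative (ZMod 3) →* (ZMod 7)ˣ where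
  toFun k := u ^ (Multiplicative.toAdd k).val
  map_one' := by decide
  map_mul' := by decide

def mulAutHom : (ZMod 7)ˣ →* MulAut (Multiplicative (ZMod 7)) where
  toFun v :=
    { toFun := fun x => Multiplicative.ofAdd ((v : ZMod 7) * x.toAdd)
      invFun := fun x => Multiplicative.ofAdd (((v⁻¹ : (ZMod 7)ˣ) : ZMod 7) * x.toAdd)
      left_inv := fun x => by simp
      right_inv := fun x => by simp
      map_mul' := fun x y => by simp [mul_add] }
  map_one' := by ext x; simp
  map_mul' v w := by ext x; simp [mul_assoc]

def φH : Multiplicative (ZMod 3) →* MulAut (Multiplicative (ZMod 7)) := mulAutHom.comp ψ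

abbrev Hgrp := Multiplicative (ZMod 7) ⋊[φH] Multiplicative (ZMod 3)

def h₀ : Hgrp := inl (Multiplicative.ofAdd (1 : ZMod 7))


/-! ### facts about Hgrp -/

theorem h₀_eq : h₀ = ⁅(inl (Multiplicative.ofAdd (-1 : ZMod 7)) : Hgrp),
    (inr (Multiplicative.ofAdd (1 : ZMod 3)) : Hgrp)⁆ := by
  rw [comm_inl_inr]
  ext <;> decide

theorem h₀_mem : h₀ ∈ derivedSeries Hgrp 1 := by
  rw [derivedSeries_succ, derivedSeries_zero, h₀_eq]
  exact Subgroup.commutator_mem_commutator (Subgroup.mem_top _) (Subgroup.mem_top _)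

theorem h₀_ne_one : h₀ ≠ 1 := by decide

theorem ds_H_one_ne_bot : derivedSeries Hgrp 1 ≠ ⊥ := fun h => by
  have := h₀_mem
  rw [h, Subgroup.mem_bot] at this
  exact h₀_ne_one this

theorem ds_H_two : derivedSeries Hgrp 2 = ⊥ := by
  have h1 : derivedSeries (Multiplicative (ZMod 3)) 1 = ⊥ := ds_comm _
  have := ds_sd_le φH h1 1
  rw [ds_comm (Multiplicative (ZMod 7)), Subgroup.map_bot] at this
  exact le_bot_iff.mp this

/-- The permutation representation of `Hgrp` on `ZMod 7`. -/
def ρ₁ : Multiplicative (ZMod 7) →* Equiv.Perm (ZMod 7) where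
  toFun x := Equiv.addLeft x.toAdd
  map_one' := by ext z; simp
  map_mul' x y := by ext z; simp [add_assoc]

def ρ₂ : Multiplicative (ZMod 3) →* Equiv.Perm (ZMod 7) :=
  (MulAction.toPermHom (ZMod 7)ˣ (ZMod 7)).comp ψ

theorem compat : ∀ g, ρ₁.comp (φH g).toMonoidHom
    = (MulAut.conj (ρ₂ g)).toMonoidHom.comp ρ₁ := by
  intro g
  ext x z
  simp [ρ₁, ρ₂, φH, mulAutHom, MulAut.conj, mul_add, Units.smul_def, MulAction.toPerm,
    Equiv.Perm.inv_def]

def Φ : Hgrp →* Equiv.Perm (ZMod 7) := lift ρ₁ ρ₂ compat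

theorem Φ_h₀ : Φ h₀ = Equiv.addLeft (1 : ZMod 7) := by
  rw [h₀, Φ, lift_inl]; rfl


/-! ### The wreath-product step -/

variable (A : Type) [Group A]

def permAut : Equiv.Perm (ZMod 7) →* MulAut (ZMod 7 → A) where
  toFun σ :=
    { toFun := fun f => f ∘ σ.symm
      invFun := fun f => f ∘ σ
      left_inv := fun f => by funext x; simp
      right_inv := fun f => by funext x; simp
      map_mul' := fun f g => rfl }
  map_one' := by ext f; rfl
  map_mul' σ τ := by ext f; rfl

def θ : Hgrp →* MulAut (ZMod 7 → A) := (permAut A).comp Φ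

abbrev Wgrp := (ZMod 7 → A) ⋊[θ A] Hgrp

theorem θ_h₀_apply (f : ZMod 7 → A) (x : ZMod 7) : θ A h₀ f x = f (-1 + x) := by
  show f ((Φ h₀).symm x) = f (-1 + x)
  rw [Φ_h₀]
  simp

variable {A}

/-- the auxiliary element `g_a` -/
def single (a : A) : ZMod 7 → A := Pi.mulSingle (M := fun _ : ZMod 7 => A) 0 a

def gelt (a : A) : ZMod 7 → A := fun x => single a x * (single a (-1 + x))⁻¹

def felt (a : A) : ZMod 7 → A := fun x => gelt a x * (gelt a (-1 + x))⁻¹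

theorem inl_gelt (a : A) :
    (inl (gelt a) : Wgrp A) = ⁅(inl (single a) : Wgrp A), inr h₀⁆ := by
  rw [comm_inl_inr]
  congr 1
  funext x
  rw [gelt]
  show single a x * (single a (-1 + x))⁻¹ = (single a * θ A h₀ (single a)⁻¹) x
  rw [Pi.mul_apply, θ_h₀_apply A ((single a)⁻¹) x, Pi.inv_apply]

theorem inl_felt (a : A) :
    (inl (felt a) : Wgrp A) = ⁅(inl (gelt a) : Wgrp A), inr h₀⁆ := by
  rw [comm_inl_inr]
  congr 1
  funext x
  rw [felt]
  show gelt a x * (gelt a (-1 + x))⁻¹ = (gelt a * θ A h₀ (gelt a)⁻¹) x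
  rw [Pi.mul_apply, θ_h₀_apply A ((gelt a)⁻¹) x, Pi.inv_apply]

theorem felt_zero (a : A) : felt a 0 = a := by
  have h1 : (-1 : ZMod 7) ≠ 0 := by decide
  have h2 : (-1 + -1 : ZMod 7) ≠ 0 := by decide
  simp [felt, gelt, single, Pi.mulSingle_apply, h1, h2]

theorem inl_felt_mem (a : A) : (inl (felt a) : Wgrp A) ∈ derivedSeries (Wgrp A) 2 := by
  have hg : (inl (gelt a) : Wgrp A) ∈ derivedSeries (Wgrp A) 1 := by
    rw [derivedSeries_succ, derivedSeries_zero, inl_gelt]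
    exact Subgroup.commutator_mem_commutator (Subgroup.mem_top _) (Subgroup.mem_top _)
  have hh : (inr h₀ : Wgrp A) ∈ derivedSeries (Wgrp A) 1 :=
    map_derivedSeries_le_derivedSeries (inr : Hgrp →* Wgrp A) 1
      (Subgroup.mem_map_of_mem _ h₀_mem)
  rw [show (2 : ℕ) = 1 + 1 from rfl, derivedSeries_succ, inl_felt]
  exact Subgroup.commutator_mem_commutator hg hh

/-- The key lower bound. -/
theorem lower (k : ℕ) : derivedSeries A k ≤
    Subgroup.map (Pi.evalMonoidHom (fun _ : ZMod 7 => A) 0)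
      ((derivedSeries (Wgrp A) (2 + k)).comap (inl : (ZMod 7 → A) →* Wgrp A)) := by
  induction k with
  | zero =>
    intro a _
    exact ⟨felt a, by simpa using inl_felt_mem a, felt_zero a⟩
  | succ k ih =>
    have hTT : ⁅(derivedSeries (Wgrp A) (2 + k)).comap (inl : (ZMod 7 → A) →* Wgrp A),
        (derivedSeries (Wgrp A) (2 + k)).comap (inl : (ZMod 7 → A) →* Wgrp A)⁆ ≤
        (derivedSeries (Wgrp A) (2 + (k + 1))).comap (inl : (ZMod 7 → A) →* Wgrp A) := by
      rw [Subgroup.commutator_le]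
      intro p hp q hq
      rw [Subgroup.mem_comap, map_commutatorElement]
      rw [show 2 + (k + 1) = (2 + k) + 1 from rfl, derivedSeries_succ]
      exact Subgroup.commutator_mem_commutator hp hq
    calc derivedSeries A (k + 1)
        = ⁅derivedSeries A k, derivedSeries A k⁆ := derivedSeries_succ A k
      _ ≤ ⁅Subgroup.map (Pi.evalMonoidHom (fun _ : ZMod 7 => A) 0)
            ((derivedSeries (Wgrp A) (2 + k)).comap (inl : (ZMod 7 → A) →* Wgrp A)),
          Subgroup.map (Pi.evalMonoidHom (fun _ : ZMod 7 => A) 0)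
            ((derivedSeries (Wgrp A) (2 + k)).comap (inl : (ZMod 7 → A) →* Wgrp A))⁆ :=
          Subgroup.commutator_mono ih ih
      _ = Subgroup.map (Pi.evalMonoidHom (fun _ : ZMod 7 => A) 0)
            ⁅(derivedSeries (Wgrp A) (2 + k)).comap (inl : (ZMod 7 → A) →* Wgrp A),
             (derivedSeries (Wgrp A) (2 + k)).comap (inl : (ZMod 7 → A) →* Wgrp A)⁆ :=
          (Subgroup.map_commutator _ _ _).symm
      _ ≤ _ := Subgroup.map_mono hTT

theorem ds_W_ne_bot {k : ℕ} (hA : derivedSeries A k ≠ ⊥) :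
    derivedSeries (Wgrp A) (2 + k) ≠ ⊥ := by
  obtain ⟨a, ha, ha1⟩ : ∃ a ∈ derivedSeries A k, a ≠ 1 := by
    by_contra h
    push_neg at h
    exact hA (Subgroup.eq_bot_iff_forall _ |>.mpr h)
  obtain ⟨f, hf, hf0⟩ := lower k ha
  intro hbot
  have hf' : (inl f : Wgrp A) ∈ derivedSeries (Wgrp A) (2 + k) := hf
  rw [hbot, Subgroup.mem_bot] at hf'
  replace hf := hf'
  apply ha1
  rw [← hf0]
  have : f = 1 := inl_injective hf
  rw [this]
  rfl

theorem ds_W_eq_bot {k : ℕ} (hA : derivedSeries A k = ⊥) :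
    derivedSeries (Wgrp A) (2 + k) = ⊥ := by
  have := ds_sd_le (θ A) ds_H_two k
  rw [ds_pi_eq_bot hA, Subgroup.map_bot] at this
  exact le_bot_iff.mp this


/-! ### Cardinality and finiteness -/

def sdEquiv {N G : Type*} [Group N] [Group G] (φ : G →* MulAut N) : (N ⋊[φ] G) ≃ N × G where
  toFun x := (x.left, x.right)
  invFun p := ⟨p.1, p.2⟩
  left_inv x := rfl
  right_inv p := rfl

instance : Finite Hgrp := Finite.of_equiv _ (sdEquiv φH).symm

theorem card_H : Nat.card Hgrp = 21 := by
  rw [Nat.card_congr (sdEquiv φH), Nat.card_prod]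
  simp [Nat.card_eq_fintype_card]

instance finiteW [Finite A] : Finite (Wgrp A) := Finite.of_equiv _ (sdEquiv (θ A)).symm

theorem card_W [Finite A] : Nat.card (Wgrp A) = Nat.card A ^ 7 * 21 := by
  rw [Nat.card_congr (sdEquiv (θ A)), Nat.card_prod, card_H, Nat.card_fun]
  simp [Nat.card_eq_fintype_card]

/-! ### The tower -/

structure PG where
  carrier : Type
  [grp : Group carrier]
  [fin : Finite carrier]

attribute [instance] PG.grp PG.fin

def tower : ℕ → PG
  | 0 => ⟨Hgrp⟩
  | n + 1 => ⟨Wgrp (tower n).carrier⟩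

def S : ℕ → ℕ
  | 0 => 1
  | n + 1 => 7 * S n + 1

theorem card_tower : ∀ n, Nat.card (tower n).carrier = 21 ^ S n
  | 0 => by rw [tower, S, pow_one]; exact card_H
  | n + 1 => by
    show Nat.card (Wgrp (tower n).carrier) = _
    rw [card_W, card_tower n, S, ← pow_mul, pow_succ, mul_comm (S n) 7]

theorem ds_tower : ∀ n, derivedSeries (tower n).carrier (2 * n + 2) = ⊥ ∧
    derivedSeries (tower n).carrier (2 * n + 1) ≠ ⊥
  | 0 => ⟨ds_H_two, ds_H_one_ne_bot⟩
  | n + 1 => by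
    obtain ⟨hb, hnb⟩ := ds_tower n
    constructor
    · show derivedSeries (Wgrp (tower n).carrier) _ = ⊥
      rw [show 2 * (n + 1) + 2 = 2 + (2 * n + 2) by ring]
      exact ds_W_eq_bot hb
    · show derivedSeries (Wgrp (tower n).carrier) _ ≠ ⊥
      rw [show 2 * (n + 1) + 1 = 2 + (2 * n + 1) by ring]
      exact ds_W_ne_bot hnb

theorem six_S (n : ℕ) : 6 * S n + 1 = 7 ^ (n + 1) := by
  induction n with
  | zero => rfl
  | succ n ih =>
    rw [S, pow_succ (7 : ℕ) (n + 1), ← ih]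
    ring

theorem Omega_21_pow (s : ℕ) : Omega (21 ^ s) = 2 * s := by
  have h : (21 : ℕ) ^ s = 3 ^ s * 7 ^ s := by rw [← mul_pow]; norm_num
  rw [h, Omega,
    (Nat.perm_primeFactorsList_mul (pow_ne_zero s (by norm_num)) (pow_ne_zero s (by norm_num))).length_eq,
    List.length_append,
    Nat.Prime.primeFactorsList_pow (by norm_num), Nat.Prime.primeFactorsList_pow (by norm_num),
    List.length_replicate, List.length_replicate]
  ring

end WC

/-- For every `r ≥ 1` there is a finite solvable group of odd order with derived length
exactly `2r` and composition length `(7^r − 1)/3` (e.g. the `r`-fold iterated wreath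
product of the transitive subgroup `H₇ ≤ S₇` of order `21`). -/
theorem exists_odd_solvable_derived_length_two_mul (r : ℕ) (hr : 1 ≤ r) :
    ∃ (G : Type) (_ : Group G) (_ : Finite G), IsSolvable G ∧ Odd (Nat.card G) ∧
      DerivedLengthEq G (2 * r) ∧ Omega (Nat.card G) = (7 ^ r - 1) / 3 := by
  obtain ⟨n, rfl⟩ : ∃ n, r = n + 1 := ⟨r - 1, by omega⟩
  refine ⟨(WC.tower n).carrier, inferInstance, inferInstance, ?_, ?_, ?_, ?_⟩
  · exact (isSolvable_def _).mpr ⟨2 * n + 2, (WC.ds_tower n).1⟩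
  · rw [WC.card_tower n]
    exact Odd.pow (by decide)
  · obtain ⟨hb, hnb⟩ := WC.ds_tower n
    refine ⟨by rw [show 2 * (n + 1) = 2 * n + 2 by ring]; exact hb, fun k hk hkb => ?_⟩
    apply hnb
    rw [eq_bot_iff, ← hkb]
    exact WC.ds_antitone _ (by omega)
  · rw [WC.card_tower n, WC.Omega_21_pow]
    have h6 := WC.six_S n
    have h : 7 ^ (n + 1) - 1 = 3 * (2 * WC.S n) := by omega
    rw [h, Nat.mul_div_cancel_left _ (by norm_num)]
end

section
/- Let p be a prime and n ≥ 2 an integer, and let Uₙ be the group of n×n upper unitriangular matrices over the field F_p (upper triangular matrices with all diagonal entries equal to 1). Then Uₙ has order p^(n(n−1)/2), so composition length n(n−1)/2, and derived length exactly ⌊log₂(n−1)⌋ + 1. -/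
section
variable (p n : ℕ) [Fact p.Prime]

/-- membership predicate: unitriangular -/
def IsUnitriangular {n : ℕ} {R : Type*} [CommRing R] (M : Matrix (Fin n) (Fin n) R) : Prop :=
  (∀ i, M i i = 1) ∧ ∀ i j : Fin n, j < i → M i j = 0

theorem IsUnitriangular.mul {n : ℕ} {R : Type*} [CommRing R]
    {A B : Matrix (Fin n) (Fin n) R} (hA : IsUnitriangular A) (hB : IsUnitriangular B) :
    IsUnitriangular (A * B) := by
  obtain ⟨hA1, hA2⟩ := hA
  obtain ⟨hB1, hB2⟩ := hB
  constructor
  · intro i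
    rw [Matrix.mul_apply, Finset.sum_eq_single i]
    · rw [hA1 i, hB1 i, one_mul]
    · intro k _ hk
      rcases lt_or_gt_of_ne hk with h | h
      · rw [hA2 i k h, zero_mul]
      · rw [hB2 k i h, mul_zero]
    · intro h
      exact absurd (Finset.mem_univ i) h
  · intro i j hji
    rw [Matrix.mul_apply]
    apply Finset.sum_eq_zero
    intro k _
    rcases lt_or_ge k i with h | h
    · rw [hA2 i k h, zero_mul]
    · rw [hB2 k j (lt_of_lt_of_le hji h), mul_zero]

/-- The group of upper unitriangular n×n matrices over F_p, as a subgroup of GL(n, F_p). -/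
def unitriangularGroup : Subgroup (GL (Fin n) (ZMod p)) where
  carrier := {M | IsUnitriangular M.val}
  one_mem' := by
    constructor
    · intro i; simp
    · intro i j hji
      have : i ≠ j := (ne_of_lt hji).symm
      simp [Matrix.one_apply, this]
  mul_mem' := fun {a b} ha hb => by
    have : (a * b).val = a.val * b.val := rfl
    show IsUnitriangular (a * b).val
    rw [this]
    exact IsUnitriangular.mul ha hb
  inv_mem' := fun {x} hx => by
    have hpow : ∀ m : ℕ, IsUnitriangular ((x ^ m).val) := by
      intro m
      induction m with
      | zero =>
        constructor
        · intro i; simp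
        · intro i j hji
          have : i ≠ j := (ne_of_lt hji).symm
          simp [Matrix.one_apply, this]
      | succ m ih =>
        have : (x ^ (m + 1)).val = (x ^ m).val * x.val := by
          rw [pow_succ, Units.val_mul]
        show IsUnitriangular ((x ^ (m+1)).val)
        rw [this]
        exact IsUnitriangular.mul ih hx
    have hfin : 0 < orderOf x := orderOf_pos x
    have hinv : x⁻¹ = x ^ (orderOf x - 1) := by
      rw [inv_eq_iff_mul_eq_one, ← pow_succ', Nat.sub_add_cancel hfin]
      exact pow_orderOf_eq_one x
    show IsUnitriangular (x⁻¹).val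
    rw [hinv]
    exact hpow _

end


open Matrix
open scoped commutatorElement

namespace UTaux

variable {n : ℕ} {R : Type*} [CommRing R]

/-- supported at distance ≥ m above the diagonal -/
def Supp (m : ℕ) (X : Matrix (Fin n) (Fin n) R) : Prop :=
  ∀ i j : Fin n, (j : ℕ) < (i : ℕ) + m → X i j = 0

lemma Supp.mono {m m' : ℕ} (h : m' ≤ m) {X : Matrix (Fin n) (Fin n) R} (hX : Supp m X) :
    Supp m' X := fun i j hij => hX i j (by omega)

lemma Supp.zero (m : ℕ) : Supp m (0 : Matrix (Fin n) (Fin n) R) := fun _ _ _ => rfl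

lemma Supp.add {m : ℕ} {X Y : Matrix (Fin n) (Fin n) R} (hX : Supp m X) (hY : Supp m Y) :
    Supp m (X + Y) := fun i j h => by
  simp [Matrix.add_apply, hX i j h, hY i j h]

lemma Supp.sub {m : ℕ} {X Y : Matrix (Fin n) (Fin n) R} (hX : Supp m X) (hY : Supp m Y) :
    Supp m (X - Y) := fun i j h => by
  simp [Matrix.sub_apply, hX i j h, hY i j h]

lemma Supp.mul {a b : ℕ} {X Y : Matrix (Fin n) (Fin n) R} (hX : Supp a X) (hY : Supp b Y) :
    Supp (a + b) (X * Y) := by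
  intro i j h
  rw [Matrix.mul_apply]
  apply Finset.sum_eq_zero
  intro k _
  rcases lt_or_ge (k : ℕ) ((i : ℕ) + a) with hk | hk
  · rw [hX i k hk, zero_mul]
  · rw [hY k j (by omega), mul_zero]

end UTaux

namespace UTaux2
open UTaux

variable (p n : ℕ) [Fact p.Prime]

lemma supp_mul_sub_one {m : ℕ} {A B : Matrix (Fin n) (Fin n) (ZMod p)}
    (hA : Supp m (A - 1)) (hB : Supp m (B - 1)) : Supp m (A * B - 1) := by
  have key : A * B - 1 = (A - 1) * (B - 1) + ((A - 1) + (B - 1)) := by noncomm_ring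
  rw [key]
  exact ((hA.mul hB).mono (by omega)).add (hA.add hB)

/-- The subgroup of GL of unitriangular matrices which agree with `1` within distance `m`
of the diagonal. -/
def gp (m : ℕ) : Subgroup (GL (Fin n) (ZMod p)) where
  carrier := {M | Supp m (M.val - 1)}
  one_mem' := by simpa using Supp.zero (R := ZMod p) (n := n) m
  mul_mem' := fun {a b} ha hb => by
    show Supp m ((a * b).val - 1)
    rw [Units.val_mul]
    exact supp_mul_sub_one p n ha hb
  inv_mem' := fun {x} hx => by
    have hpow : ∀ k : ℕ, Supp m ((x ^ k).val - 1) := by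
      intro k
      induction k with
      | zero => simpa using Supp.zero (R := ZMod p) (n := n) m
      | succ k ih =>
        show Supp m ((x ^ (k + 1)).val - 1)
        rw [pow_succ, Units.val_mul]
        exact supp_mul_sub_one p n ih hx
    show Supp m ((x⁻¹).val - 1)
    have hinv : x⁻¹ = x ^ (orderOf x - 1) := by
      rw [inv_eq_iff_mul_eq_one, ← pow_succ', Nat.sub_add_cancel (orderOf_pos x)]
      exact pow_orderOf_eq_one x
    rw [hinv]; exact hpow _

lemma gp_mono {m m' : ℕ} (h : m' ≤ m) : gp p n m ≤ gp p n m' :=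
  fun _x hx => Supp.mono h hx

lemma commutator_mem_gp {a b : ℕ} (ha : 1 ≤ a) (hb : 1 ≤ b)
    {x y : GL (Fin n) (ZMod p)} (hx : x ∈ gp p n a) (hy : y ∈ gp p n b) :
    ⁅x, y⁆ ∈ gp p n (a + b) := by
  show Supp (a + b) (⁅x, y⁆.val - 1)
  have hxx : x.val * (x⁻¹).val = 1 := by rw [← Units.val_mul, mul_inv_cancel, Units.val_one]
  have key : ⁅x, y⁆.val - 1 =
      ((x.val - 1) * (y.val - 1) - (y.val - 1) * (x.val - 1)) * ((x⁻¹ * y⁻¹).val) := by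
    have h1 : ((x.val - 1) * (y.val - 1) - (y.val - 1) * (x.val - 1))
        = x.val * y.val - y.val * x.val := by noncomm_ring
    rw [h1, commutatorElement_def]
    simp only [Units.val_mul, sub_mul]
    congr 1
    · noncomm_ring
    · symm
      calc y.val * x.val * ((x⁻¹).val * (y⁻¹).val)
          = y.val * (x.val * (x⁻¹).val) * (y⁻¹).val := by noncomm_ring
        _ = 1 := by rw [hxx, mul_one, ← Units.val_mul, mul_inv_cancel, Units.val_one]
  rw [key]
  have hW : Supp (a + b) ((x.val - 1) * (y.val - 1) - (y.val - 1) * (x.val - 1)) :=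
    (hx.mul hy).sub ((hy.mul hx).mono (by omega))
  have hz : (x⁻¹ * y⁻¹) ∈ gp p n 1 :=
    mul_mem (gp_mono p n ha ((gp p n a).inv_mem hx)) (gp_mono p n hb ((gp p n b).inv_mem hy))
  have key2 : ((x.val - 1) * (y.val - 1) - (y.val - 1) * (x.val - 1)) * ((x⁻¹ * y⁻¹).val)
      = ((x.val - 1) * (y.val - 1) - (y.val - 1) * (x.val - 1)) * ((x⁻¹ * y⁻¹).val - 1)
        + ((x.val - 1) * (y.val - 1) - (y.val - 1) * (x.val - 1)) := by noncomm_ring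
  rw [key2]
  exact ((hW.mul hz).mono (by omega)).add hW


end UTaux2

lemma comm_expand {R : Type*} [Ring R] (A B : R) (hA : A * A = 0) (hB : B * B = 0)
    (hBA : B * A = 0) : (1 + A) * (1 + B) * ((1 - A) * (1 - B)) = 1 + A * B := by
  have hAAB : A * (A * B) = 0 := by rw [← mul_assoc, hA, zero_mul]
  have hBAB : B * (A * B) = 0 := by rw [← mul_assoc, hBA, zero_mul]
  have hABA : A * (B * A) = 0 := by rw [hBA, mul_zero]
  have hABB : A * (B * B) = 0 := by rw [hB, mul_zero]
  have h1 : (1 + A) * (1 + B) = 1 + (A + B + A * B) := by noncomm_ring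
  have h2 : (1 - A) * (1 - B) = 1 - (A + B - A * B) := by noncomm_ring
  rw [h1, h2]
  have h3 : (A + B + A * B) * (A + B - A * B) = A * B := by
    simp only [add_mul, mul_add, mul_sub, sub_mul, mul_assoc, hA, hB, hBA, hAAB, hBAB, hABA,
      hABB, mul_zero, zero_mul, add_zero, sub_zero, zero_add, zero_sub]
  calc (1 + (A + B + A * B)) * (1 - (A + B - A * B))
      = 1 + (A + B + A * B) - (A + B - A * B) - (A + B + A * B) * (A + B - A * B) := by
        noncomm_ring
    _ = 1 + A * B := by rw [h3]; abel

variable (p n : ℕ) [Fact p.Prime]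

/-- elementary transvection as an element of GL -/
def elemGL (i j : Fin n) (h : i ≠ j) : GL (Fin n) (ZMod p) :=
  ⟨1 + single i j 1, 1 - single i j 1,
   by
    have he : single i j (1 : ZMod p) * single i j 1 = 0 :=
      single_mul_single_of_ne (c := (1 : ZMod p)) i j i h.symm 1
    noncomm_ring
    rw [he]; simp,
   by
    have he : single i j (1 : ZMod p) * single i j 1 = 0 :=
      single_mul_single_of_ne (c := (1 : ZMod p)) i j i h.symm 1
    noncomm_ring
    rw [he]; simp⟩

lemma elemGL_comm (i m j : Fin n) (hij : i ≠ j) (him : i ≠ m) (hmj : m ≠ j) :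
    elemGL p n i j hij = ⁅elemGL p n i m him, elemGL p n m j hmj⁆ := by
  apply Units.ext
  have hv : ∀ (a b : Fin n) (h : a ≠ b),
      (elemGL p n a b h).val = 1 + single a b 1 := fun _ _ _ => rfl
  have hiv : ∀ (a b : Fin n) (h : a ≠ b),
      ((elemGL p n a b h)⁻¹).val = 1 - single a b 1 := fun _ _ _ => rfl
  have hval : (⁅elemGL p n i m him, elemGL p n m j hmj⁆ : GL (Fin n) (ZMod p)).val
      = (1 + single i m (1 : ZMod p)) * (1 + single m j 1)
        * ((1 - single i m 1) * (1 - single m j 1)) := by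
    rw [commutatorElement_def]
    simp only [Units.val_mul]
    rw [hv, hv, hiv, hiv, mul_assoc]
  rw [hv, hval, comm_expand _ _ (single_mul_single_of_ne (c := (1 : ZMod p)) i m i him.symm 1)
      (single_mul_single_of_ne (c := (1 : ZMod p)) m j m hmj.symm 1) (single_mul_single_of_ne (c := (1 : ZMod p)) m j i hij.symm 1)]
  show 1 + single i j 1 = _
  rw [single_mul_single_same (c := (1 : ZMod p)) i m j 1, one_mul]


namespace UTaux3
open UTaux UTaux2

variable (p n : ℕ) [Fact p.Prime]

lemma unitriangular_le_gp_one : unitriangularGroup p n ≤ gp p n 1 := by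
  rintro M ⟨h1, h2⟩
  intro i j hij
  rw [Matrix.sub_apply]
  rcases eq_or_ne i j with rfl | hne
  · rw [h1 i, Matrix.one_apply_eq, sub_self]
  · have hji : j < i := by
      apply Fin.lt_def.2
      have : (j : ℕ) ≠ (i : ℕ) := fun h => hne (Fin.ext h.symm)
      omega
    rw [h2 i j hji, Matrix.one_apply_ne hne, sub_self]

lemma gp_one_le_unitriangular : gp p n 1 ≤ unitriangularGroup p n := by
  intro M hM
  constructor
  · intro i
    have := hM i i (by omega)
    rw [Matrix.sub_apply, Matrix.one_apply_eq, sub_eq_zero] at this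
    exact this
  · intro i j hji
    have := hM i j (by have := Fin.lt_def.1 hji; omega)
    rw [Matrix.sub_apply, Matrix.one_apply_ne (Fin.ne_of_lt hji).symm,
      sub_zero] at this
    exact this

lemma map_derivedSeries_le (k : ℕ) :
    Subgroup.map (unitriangularGroup p n).subtype
      (derivedSeries ↥(unitriangularGroup p n) k) ≤ gp p n (2 ^ k) := by
  induction k with
  | zero =>
    intro x hx
    obtain ⟨y, -, rfl⟩ := hx
    exact unitriangular_le_gp_one p n y.2
  | succ k ih =>
    rw [derivedSeries_succ, Subgroup.map_commutator]
    rw [Subgroup.commutator_le]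
    intro g1 hg1 g2 hg2
    have := commutator_mem_gp p n (Nat.one_le_two_pow) (Nat.one_le_two_pow)
      (ih hg1) (ih hg2)
    rwa [← two_mul, ← pow_succ'] at this

lemma elemGL_mem_unitriangular {i j : Fin n} (hlt : i < j) (hne : i ≠ j) :
    elemGL p n i j hne ∈ unitriangularGroup p n := by
  constructor
  · intro a
    show (1 + single i j (1 : ZMod p)) a a = 1
    rw [Matrix.add_apply, Matrix.one_apply_eq,
      single_apply_of_ne (i := i) (j := j) (c := (1 : ZMod p)) (i' := a) (j' := a) (by rintro ⟨rfl, rfl⟩; exact hne rfl), add_zero]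
  · intro a b hba
    show (1 + single i j (1 : ZMod p)) a b = 0
    rw [Matrix.add_apply, Matrix.one_apply_ne (Fin.ne_of_lt hba).symm,
      single_apply_of_ne (i := i) (j := j) (c := (1 : ZMod p)) (i' := a) (j' := b) (by
        rintro ⟨rfl, rfl⟩; exact absurd hlt (not_lt.2 hba.le)), add_zero]

lemma elemGL_mem_map (k : ℕ) : ∀ (i j : Fin n) (hne : i ≠ j), (i : ℕ) + 2 ^ k ≤ (j : ℕ) →
    elemGL p n i j hne ∈ Subgroup.map (unitriangularGroup p n).subtype
      (derivedSeries ↥(unitriangularGroup p n) k) := by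
  induction k with
  | zero =>
    intro i j hne h
    have hlt : i < j := Fin.lt_def.2 (by omega)
    exact ⟨⟨elemGL p n i j hne, elemGL_mem_unitriangular p n hlt hne⟩, Subgroup.mem_top _, rfl⟩
  | succ k ih =>
    intro i j hne h
    have h2k : 1 ≤ 2 ^ k := Nat.one_le_two_pow
    have hmlt : (i : ℕ) + 2 ^ k < n := by
      have := j.2
      have : (i : ℕ) + 2 ^ (k + 1) ≤ (j : ℕ) := h
      have h2 : 2 ^ (k + 1) = 2 ^ k + 2 ^ k := by rw [pow_succ]; omega
      omega
    set m : Fin n := ⟨(i : ℕ) + 2 ^ k, hmlt⟩ with hm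
    have him : i ≠ m := by
      intro hh; have := congrArg Fin.val hh; simp only [hm] at this; omega
    have hmj : m ≠ j := by
      intro hh; have := congrArg Fin.val hh
      have h2 : 2 ^ (k + 1) = 2 ^ k + 2 ^ k := by rw [pow_succ]; omega
      simp only [hm] at this; omega
    rw [elemGL_comm p n i m j hne him hmj]
    rw [derivedSeries_succ, Subgroup.map_commutator]
    apply Subgroup.commutator_mem_commutator
    · exact ih i m him (by simp [hm])
    · apply ih m j hmj
      have h2 : 2 ^ (k + 1) = 2 ^ k + 2 ^ k := by rw [pow_succ]; omega
      simp [hm]; omega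

end UTaux3


namespace UTcard

variable (p n : ℕ) [Fact p.Prime]

def mkMat (f : ∀ i : Fin n, Fin i → ZMod p) : Matrix (Fin n) (Fin n) (ZMod p) :=
  Matrix.of fun r c => if h : (r : ℕ) < (c : ℕ) then f c ⟨r, h⟩ else if r = c then 1 else 0

lemma mkMat_apply (f : ∀ i : Fin n, Fin i → ZMod p) (r c : Fin n) :
    mkMat p n f r c
      = if h : (r : ℕ) < (c : ℕ) then f c ⟨(r : ℕ), h⟩ else if r = c then 1 else 0 := rfl

lemma mkMat_isUnit (f : ∀ i : Fin n, Fin i → ZMod p) : IsUnit (mkMat p n f) := by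
  apply (Matrix.isUnit_iff_isUnit_det _).2
  rw [Matrix.det_of_upperTriangular]
  · have : ∀ i : Fin n, mkMat p n f i i = 1 := by
      intro i; rw [mkMat_apply, dif_neg (lt_irrefl _), if_pos rfl]
    rw [Finset.prod_congr rfl fun i _ => this i, Finset.prod_const_one]
    exact isUnit_one
  · intro i j hji
    have hji' : (j : ℕ) < (i : ℕ) := hji
    have h1 : ¬ ((i : ℕ) < (j : ℕ)) := by omega
    have h2 : i ≠ j := fun h => by rw [h] at hji'; omega
    rw [mkMat_apply, dif_neg h1, if_neg h2]

noncomputable def cardEquiv : ↥(unitriangularGroup p n) ≃ (∀ i : Fin n, Fin i → ZMod p) where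
  toFun M i j := (M.val : GL (Fin n) (ZMod p)).val ⟨(j : ℕ), j.2.trans i.2⟩ i
  invFun f := ⟨(mkMat_isUnit p n f).unit, by
    show IsUnitriangular ((mkMat_isUnit p n f).unit).val
    rw [IsUnit.unit_spec]
    constructor
    · intro i; rw [mkMat_apply, dif_neg (lt_irrefl _), if_pos rfl]
    · intro i j hji
      have hji' : (j : ℕ) < (i : ℕ) := hji
      have h1 : ¬ ((i : ℕ) < (j : ℕ)) := by omega
      have h2 : i ≠ j := fun h => by rw [h] at hji'; omega
      rw [mkMat_apply, dif_neg h1, if_neg h2]⟩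
  left_inv M := by
    apply Subtype.ext
    apply Units.ext
    rw [IsUnit.unit_spec]
    ext r c
    obtain ⟨h1, h2⟩ := M.2
    rcases lt_trichotomy (r : ℕ) (c : ℕ) with h | h | h
    · rw [mkMat_apply, dif_pos h]
    · have : r = c := Fin.ext h
      subst this
      rw [mkMat_apply, dif_neg (lt_irrefl _), if_pos rfl]
      exact (h1 r).symm
    · have hcr : c < r := Fin.lt_def.2 h
      rw [mkMat_apply, dif_neg (by omega : ¬ (r : ℕ) < (c : ℕ)),
        if_neg (fun hh => by rw [hh] at h; omega)]
      exact (h2 r c hcr).symm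
  right_inv f := by
    funext i j
    show ((mkMat_isUnit p n f).unit).val ⟨(j : ℕ), j.2.trans i.2⟩ i = f i j
    rw [IsUnit.unit_spec, mkMat_apply, dif_pos (show ((⟨(j : ℕ), j.2.trans i.2⟩ : Fin n) : ℕ) < (i : ℕ) from j.2)]

lemma card_eq : Nat.card ↥(unitriangularGroup p n) = p ^ (n * (n - 1) / 2) := by
  rw [Nat.card_congr (cardEquiv p n), Nat.card_pi]
  have h1 : ∀ i : Fin n, Nat.card (Fin (i : ℕ) → ZMod p) = p ^ (i : ℕ) := fun i => by
    rw [Nat.card_fun, Nat.card_zmod, Nat.card_eq_fintype_card, Fintype.card_fin]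
  rw [Finset.prod_congr rfl fun i _ => h1 i, Finset.prod_pow_eq_pow_sum]
  congr 1
  rw [Fin.sum_univ_eq_sum_range (fun i => i) n]
  exact Finset.sum_range_id n

end UTcard

/-- For a prime `p` and `n ≥ 2`, the group `Uₙ` of `n × n` upper unitriangular matrices
over `F_p` has order `p^(n(n−1)/2)` (hence composition length `n(n−1)/2`) and derived
length exactly `⌊log₂(n−1)⌋ + 1`. -/
theorem unitriangularGroup_card_and_derived_length (p n : ℕ) [Fact p.Prime] (hn : 2 ≤ n) :
    Nat.card (unitriangularGroup p n) = p ^ (n * (n - 1) / 2) ∧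
      Omega (Nat.card (unitriangularGroup p n)) = n * (n - 1) / 2 ∧
      DerivedLengthEq (unitriangularGroup p n) (Nat.log 2 (n - 1) + 1) := by
  have hcard : Nat.card ↥(unitriangularGroup p n) = p ^ (n * (n - 1) / 2) :=
    UTcard.card_eq p n
  refine ⟨hcard, ?_, ?_, ?_⟩
  · rw [hcard]
    show ((p ^ (n * (n - 1) / 2)).primeFactorsList).length = n * (n - 1) / 2
    rw [(Fact.out : p.Prime).primeFactorsList_pow, List.length_replicate]
  · -- derived series vanishes at d
    set d := Nat.log 2 (n - 1) + 1 with hd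
    have hnd : n ≤ 2 ^ d := by
      have h : n - 1 < 2 ^ d := by
        rw [hd]; exact Nat.lt_pow_succ_log_self (by norm_num : 1 < 2) (n - 1)
      omega
    apply (Subgroup.eq_bot_iff_forall _).2
    intro x hx
    have hmem : (x : GL (Fin n) (ZMod p)) ∈ UTaux2.gp p n (2 ^ d) :=
      UTaux3.map_derivedSeries_le p n d ⟨x, hx, rfl⟩
    have hval : ((x : GL (Fin n) (ZMod p)) : Matrix (Fin n) (Fin n) (ZMod p)) = 1 := by
      ext i j
      have hz := hmem i j (by have := j.2; omega)
      rw [Matrix.sub_apply, sub_eq_zero] at hz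
      exact hz
    apply Subtype.ext
    simp only [OneMemClass.coe_one]
    apply Units.ext
    rw [Units.val_one]
    exact hval
  · -- no earlier term is trivial
    intro k hk hbot
    have hkle : k ≤ Nat.log 2 (n - 1) := by omega
    have h2k : 2 ^ k ≤ n - 1 :=
      le_trans (Nat.pow_le_pow_right (by norm_num) hkle)
        (Nat.pow_log_le_self 2 (by omega))
    have h1le : 1 ≤ 2 ^ k := Nat.one_le_two_pow
    set i0 : Fin n := ⟨0, by omega⟩ with hi0
    set j0 : Fin n := ⟨2 ^ k, by omega⟩ with hj0
    have hne : i0 ≠ j0 := by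
      intro h
      have := congrArg Fin.val h
      simp only [hi0, hj0] at this
      omega
    have hmem := UTaux3.elemGL_mem_map p n k i0 j0 hne (by simp only [hi0, hj0]; omega)
    rw [hbot, Subgroup.map_bot, Subgroup.mem_bot] at hmem
    have hL : (elemGL p n i0 j0 hne).val i0 j0 = 1 := by
      show (1 + single i0 j0 (1 : ZMod p)) i0 j0 = 1
      rw [Matrix.add_apply, Matrix.one_apply_ne hne, single_apply_same, zero_add]
    rw [hmem, Units.val_one, Matrix.one_apply_ne hne] at hL
    exact zero_ne_one hL
end
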